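/- arXiv:2305.06117 — 8 statements merged into one kernel-verified Lean document; each statement's English description precedes it below -/
import Mathlib

section
/- In the polynomial ring F_q[x,y] one has the identity f_R(x,y)^p − f_R(x,y) = −x^{p^e}·E_R(y) + x·R(y) + y·R(x). -/
open Finset Polynomial

/-- The additive polynomial `R(x) = ∑_{i=0}^e a_i x^{p^i}`, evaluated in any commutative ring. -/
def Rgen {A : Type*} [CommRing A] (p e : ℕ) (a : ℕ → A) (x : A) : A :=
  ∑ i ∈ Finset.range (e + 1), a i * x ^ p ^ i

/-- `E_R(x) = R(x)^{p^e} + ∑_{i=0}^e (a_i x)^{p^{e-i}}`. -/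
def Egen {A : Type*} [CommRing A] (p e : ℕ) (a : ℕ → A) (x : A) : A :=
  Rgen p e a x ^ p ^ e + ∑ i ∈ Finset.range (e + 1), (a i * x) ^ p ^ (e - i)

/-- `f_R(x,y) = -∑_{i=0}^{e-1} ( ∑_{j=0}^{e-i-1} (a_i x^{p^i} y)^{p^j} + (x R(y))^{p^i} )`. -/
def fgen {A : Type*} [CommRing A] (p e : ℕ) (a : ℕ → A) (x y : A) : A :=
  -∑ i ∈ Finset.range e,
    ((∑ j ∈ Finset.range (e - i), (a i * x ^ p ^ i * y) ^ p ^ j) + (x * Rgen p e a y) ^ p ^ i)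

/-- The set `H_R = {(a,b) : E_R(a) = 0, b^p - b = a R(a)}`. -/
def Hset {K : Type*} [CommRing K] (p e : ℕ) (a : ℕ → K) : Set (K × K) :=
  {h | Egen p e a h.1 = 0 ∧ h.2 ^ p - h.2 = h.1 * Rgen p e a h.1}

/-- The group law `(a,b)·(a',b') = (a+a', b+b'+f_R(a,a'))` on `H_R`. -/
def Hmul {K : Type*} [CommRing K] (p e : ℕ) (a : ℕ → K) (h h' : K × K) : K × K :=
  (h.1 + h'.1, h.2 + h'.2 + fgen p e a h.1 h'.1)

theorem aux0 {A : Type*} [CommRing A] (p₀ n : ℕ) (hp₀ : p₀.Prime) [CharP A p₀]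
    (e : ℕ) (a : ℕ → A) (x y : A) :
    fgen (p₀ ^ n) e a x y ^ p₀ ^ n - fgen (p₀ ^ n) e a x y
      = -(x ^ (p₀ ^ n) ^ e * Egen (p₀ ^ n) e a y) + x * Rgen (p₀ ^ n) e a y
        + y * Rgen (p₀ ^ n) e a x := by
  haveI : Fact p₀.Prime := ⟨hp₀⟩
  set P := p₀ ^ n with hP
  have hfrob : ∀ u : A, u ^ P = iterateFrobenius A p₀ n u := fun u => rfl
  have key : fgen P e a x y ^ P
      = -∑ i ∈ Finset.range e,
          ((∑ j ∈ Finset.range (e - i), (a i * x ^ P ^ i * y) ^ P ^ (j + 1))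
            + (x * Rgen P e a y) ^ P ^ (i + 1)) := by
    rw [hfrob, fgen, map_neg, map_sum]
    congr 1
    refine Finset.sum_congr rfl fun i _ => ?_
    rw [map_add, map_sum]
    congr 1
    · refine Finset.sum_congr rfl fun j _ => ?_
      rw [← hfrob, ← pow_mul, ← pow_succ]
    · rw [← hfrob, ← pow_mul, ← pow_succ]
  rw [key, fgen]
  have step1 : (∑ i ∈ Finset.range e,
          ((∑ j ∈ Finset.range (e - i), (a i * x ^ P ^ i * y) ^ P ^ (j + 1))
            + (x * Rgen P e a y) ^ P ^ (i + 1)))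
      - (∑ i ∈ Finset.range e,
          ((∑ j ∈ Finset.range (e - i), (a i * x ^ P ^ i * y) ^ P ^ j)
            + (x * Rgen P e a y) ^ P ^ i))
      = (∑ i ∈ Finset.range e,
          ((a i * x ^ P ^ i * y) ^ P ^ (e - i) - a i * x ^ P ^ i * y))
        + ((x * Rgen P e a y) ^ P ^ e - x * Rgen P e a y) := by
    rw [← Finset.sum_sub_distrib]
    have : ∀ i ∈ Finset.range e,
        ((∑ j ∈ Finset.range (e - i), (a i * x ^ P ^ i * y) ^ P ^ (j + 1))
            + (x * Rgen P e a y) ^ P ^ (i + 1))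
          - ((∑ j ∈ Finset.range (e - i), (a i * x ^ P ^ i * y) ^ P ^ j)
            + (x * Rgen P e a y) ^ P ^ i)
        = ((a i * x ^ P ^ i * y) ^ P ^ (e - i) - a i * x ^ P ^ i * y)
          + ((x * Rgen P e a y) ^ P ^ (i + 1) - (x * Rgen P e a y) ^ P ^ i) := by
      intro i hi
      have h := Finset.sum_range_sub (fun j => (a i * x ^ P ^ i * y) ^ P ^ j) (e - i)
      simp only [pow_zero, pow_one] at h
      rw [← h, Finset.sum_sub_distrib]
      ring
    rw [Finset.sum_congr rfl this, Finset.sum_add_distrib,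
      Finset.sum_range_sub (fun i => (x * Rgen P e a y) ^ P ^ i), pow_zero, pow_one]
  have lhs_eq : -(∑ i ∈ Finset.range e,
          ((∑ j ∈ Finset.range (e - i), (a i * x ^ P ^ i * y) ^ P ^ (j + 1))
            + (x * Rgen P e a y) ^ P ^ (i + 1)))
      - -(∑ i ∈ Finset.range e,
          ((∑ j ∈ Finset.range (e - i), (a i * x ^ P ^ i * y) ^ P ^ j)
            + (x * Rgen P e a y) ^ P ^ i))
      = -((∑ i ∈ Finset.range e,
          ((a i * x ^ P ^ i * y) ^ P ^ (e - i) - a i * x ^ P ^ i * y))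
        + ((x * Rgen P e a y) ^ P ^ e - x * Rgen P e a y)) := by
    rw [← step1]; ring
  rw [lhs_eq]
  -- rewrite the per-term power
  have hwpow : ∀ i ∈ Finset.range e,
      (a i * x ^ P ^ i * y) ^ P ^ (e - i) - a i * x ^ P ^ i * y
        = (a i * y) ^ P ^ (e - i) * x ^ P ^ e - a i * x ^ P ^ i * y := by
    intro i hi
    rw [Finset.mem_range] at hi
    have hexp : P ^ i * P ^ (e - i) = P ^ e := by
      rw [← pow_add, Nat.add_sub_cancel' hi.le]
    rw [show a i * x ^ P ^ i * y = (a i * y) * x ^ P ^ i by ring, mul_pow,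
      ← pow_mul x (P ^ i), hexp]
  rw [Finset.sum_congr rfl hwpow]
  have hE : Egen P e a y = Rgen P e a y ^ P ^ e
      + ((∑ i ∈ Finset.range e, (a i * y) ^ P ^ (e - i)) + a e * y) := by
    rw [Egen, Finset.sum_range_succ, Nat.sub_self, pow_zero, pow_one]
  have hRx : Rgen P e a x = (∑ i ∈ Finset.range e, a i * x ^ P ^ i) + a e * x ^ P ^ e := by
    rw [Rgen, Finset.sum_range_succ]
  rw [hE, hRx]
  have hs1 : (∑ i ∈ Finset.range e, ((a i * y) ^ P ^ (e - i) * x ^ P ^ e - a i * x ^ P ^ i * y))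
      = x ^ P ^ e * (∑ i ∈ Finset.range e, (a i * y) ^ P ^ (e - i))
        - y * (∑ i ∈ Finset.range e, a i * x ^ P ^ i) := by
    rw [Finset.mul_sum, Finset.mul_sum, ← Finset.sum_sub_distrib]
    exact Finset.sum_congr rfl fun i _ => by ring
  rw [hs1, mul_pow]
  ring

/-- In `F_q[x,y]` one has
`f_R(x,y)^p − f_R(x,y) = −x^{p^e}·E_R(y) + x·R(y) + y·R(x)`. -/
theorem statement0 {F : Type*} [Field F] [Fintype F] (p₀ n p s q e : ℕ)
    (hp₀ : p₀.Prime) [CharP F p₀] (hn : 0 < n) (hpn : p = p₀ ^ n)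
    (hs : 0 < s) (hq : q = p ^ s) (hcard : Fintype.card F = q)
    (a : ℕ → F) (hae : a e ≠ 0) :
    fgen p e (fun i => (MvPolynomial.C (a i) : MvPolynomial (Fin 2) F))
        (MvPolynomial.X 0) (MvPolynomial.X 1) ^ p
      - fgen p e (fun i => (MvPolynomial.C (a i) : MvPolynomial (Fin 2) F))
        (MvPolynomial.X 0) (MvPolynomial.X 1)
    = -(MvPolynomial.X 0 ^ p ^ e *
          Egen p e (fun i => (MvPolynomial.C (a i) : MvPolynomial (Fin 2) F)) (MvPolynomial.X 1))
      + MvPolynomial.X 0 *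
          Rgen p e (fun i => (MvPolynomial.C (a i) : MvPolynomial (Fin 2) F)) (MvPolynomial.X 1)
      + MvPolynomial.X 1 *
          Rgen p e (fun i => (MvPolynomial.C (a i) : MvPolynomial (Fin 2) F)) (MvPolynomial.X 0) := by
  subst hpn
  exact aux0 p₀ n hp₀ e _ _ _
end

section
/- For every h = (a,b) ∈ H_R and every natural number i ≥ 2, one has h^i = (i·a, i·b + C(i,2)·f_R(a,a)), where C(i,2) = i(i−1)/2 is a binomial coefficient. Consequently the order of every element of H_R divides p_0 if p_0 is odd, and divides 4 if p_0 = 2. -/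
open Finset Polynomial

/-- for `h = (a,b) ∈ H_R` and `i ≥ 2`, `h^i = (i·a, i·b + C(i,2)·f_R(a,a))`;
hence the order of every element of `H_R` divides `p₀` if `p₀` is odd, and divides `4`
if `p₀ = 2`. -/
theorem statement3 {F K : Type*} [Field F] [Fintype F] [Field K] [IsAlgClosed K] [Algebra F K]
    (p₀ n p s q e : ℕ) (hp₀ : p₀.Prime) [CharP F p₀] (hn : 0 < n) (hpn : p = p₀ ^ n)
    (hs : 0 < s) (hq : q = p ^ s) (hcard : Fintype.card F = q)
    (a : ℕ → F) (hae : a e ≠ 0) :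
    let aK : ℕ → K := fun i => algebraMap F K (a i)
    let H : Set (K × K) := Hset p e aK
    let μ : K × K → K × K → K × K := Hmul p e aK
    -- iterated product `h^i` in `H_R` (with `h^0 = (0,0)`, the identity element)
    let μpow : K × K → ℕ → K × K := fun h i =>
      Nat.rec (motive := fun _ => K × K) ((0 : K), (0 : K)) (fun _ ih => μ ih h) i
    (∀ h ∈ H, ∀ i : ℕ, 2 ≤ i →
      μpow h i = ((i : K) * h.1, (i : K) * h.2 + (i.choose 2 : K) * fgen p e aK h.1 h.1)) ∧
    (∀ h ∈ H, (Odd p₀ → μpow h p₀ = (0, 0)) ∧ (p₀ = 2 → μpow h 4 = (0, 0))) := by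
  intro aK H μ μpow
  have hK : CharP K p₀ := charP_of_injective_algebraMap (algebraMap F K).injective p₀
  haveI := hK
  haveI : ExpChar K p₀ := ExpChar.prime hp₀
  -- natural number casts are fixed by p₀-power maps
  have hfrob : ∀ (i k : ℕ), ((i : K)) ^ p₀ ^ k = (i : K) := by
    intro i k
    induction k with
    | zero => simp
    | succ k ih =>
      rw [pow_succ, pow_mul, ih]
      have := map_natCast (frobenius K p₀) i
      rwa [frobenius_def] at this
  have hcK : ∀ (i k : ℕ), ((i : K)) ^ p ^ k = (i : K) := by
    intro i k
    rw [hpn, ← pow_mul]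
    exact hfrob i (n * k)
  -- fgen is semilinear in the first variable under constants fixed by p-power maps
  have hfs : ∀ c : K, (∀ k : ℕ, c ^ p ^ k = c) → ∀ x y : K,
      fgen p e aK (c * x) y = c * fgen p e aK x y := by
    intro c hc x y
    have key : ∀ (b : K) (k : ℕ), (c * b) ^ p ^ k = c * b ^ p ^ k := fun b k => by
      rw [mul_pow, hc]
    unfold fgen
    rw [mul_neg]
    congr 1
    rw [Finset.mul_sum]
    refine Finset.sum_congr rfl fun i _ => ?_
    rw [mul_add]
    congr 1
    · rw [Finset.mul_sum]
      refine Finset.sum_congr rfl fun j _ => ?_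
      have hb : aK i * (c * x) ^ p ^ i * y = c * (aK i * x ^ p ^ i * y) := by
        rw [key x]; ring
      rw [hb, key]
    · have hb : c * x * Rgen p e aK y = c * (x * Rgen p e aK y) := by ring
      rw [hb, key]
  -- the main power formula, valid for all i
  have main : ∀ h : K × K, ∀ i : ℕ,
      μpow h i = ((i : K) * h.1, (i : K) * h.2 + (i.choose 2 : K) * fgen p e aK h.1 h.1) := by
    intro h i
    induction i with
    | zero =>
      show ((0 : K), (0 : K)) = _
      simp
    | succ i ih =>
      show Hmul p e aK (μpow h i) h = _
      rw [ih]
      unfold Hmul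
      have hchoose : (((i + 1).choose 2 : ℕ) : K) = (i.choose 2 : K) + (i : K) := by
        rw [Nat.choose_succ_succ]
        push_cast [Nat.choose_one_right]
        ring
      have hlin : fgen p e aK ((i : K) * h.1) h.1 = (i : K) * fgen p e aK h.1 h.1 :=
        hfs (i : K) (hcK i) h.1 h.1
      refine Prod.ext ?_ ?_
      · show (i : K) * h.1 + h.1 = (((i + 1 : ℕ) : K)) * h.1
        push_cast
        ring
      · show (i : K) * h.2 + (i.choose 2 : K) * fgen p e aK h.1 h.1 + h.2 +
            fgen p e aK ((i : K) * h.1) h.1 = _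
        rw [hlin, hchoose]
        push_cast
        ring
  refine ⟨fun h _ i _ => main h i, fun h _ => ⟨?_, ?_⟩⟩
  · intro hodd
    rw [main h p₀]
    have h1 : ((p₀ : ℕ) : K) = 0 := CharP.cast_eq_zero K p₀
    have h2 : ((p₀.choose 2 : ℕ) : K) = 0 := by
      rw [CharP.cast_eq_zero_iff K p₀]
      refine hp₀.dvd_choose_self (by norm_num) ?_
      have h2le := hp₀.two_le
      rcases hodd with ⟨m, hm⟩
      omega
    rw [h1, h2]
    simp
  · intro h2
    rw [main h 4]
    have h4 : ((4 : ℕ) : K) = 0 := by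
      rw [CharP.cast_eq_zero_iff K p₀, h2]
      decide
    have h6 : (((4).choose 2 : ℕ) : K) = 0 := by
      rw [CharP.cast_eq_zero_iff K p₀, h2]
      decide
    rw [h4, h6]
    simp
end

section
/- Assume p is odd. If a ∈ F_q satisfies E_R(a) = 0, then the element b := f_R(a,a)/2 lies in F_q and satisfies b^p − b = a·R(a); in particular (a, f_R(a,a)/2) ∈ H_R ∩ (F_q × F_q). -/
open Finset Polynomial

lemma telescope {F : Type*} [Field F] (p₀ n p : ℕ) (hp₀ : p₀.Prime) [CharP F p₀]
    (hpn : p = p₀ ^ n) (t : F) (m : ℕ) :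
    (∑ j ∈ Finset.range m, t ^ p ^ j) ^ p - ∑ j ∈ Finset.range m, t ^ p ^ j
      = t ^ p ^ m - t := by
  haveI := Fact.mk hp₀
  have hφ : ∀ y : F, iterateFrobenius F p₀ n y = y ^ p := fun y => by
    rw [iterateFrobenius_def, hpn]
  rw [← hφ, map_sum]
  have h1 : ∀ j : ℕ, iterateFrobenius F p₀ n (t ^ p ^ j) = t ^ p ^ (j + 1) := fun j => by
    rw [hφ, ← pow_mul, ← pow_succ]
  simp_rw [h1]
  rw [← Finset.sum_sub_distrib, Finset.sum_range_sub (fun j => t ^ p ^ j), pow_zero, pow_one]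

lemma main_calc {F : Type*} [Field F] (p₀ n p e : ℕ) (hp₀ : p₀.Prime) [CharP F p₀]
    (hpn : p = p₀ ^ n) (a : ℕ → F) (x : F) :
    fgen p e a x x ^ p - fgen p e a x x
      = 2 * (x * Rgen p e a x) - x ^ p ^ e * Egen p e a x := by
  haveI := Fact.mk hp₀
  have hφ : ∀ y : F, iterateFrobenius F p₀ n y = y ^ p := fun y => by
    rw [iterateFrobenius_def, hpn]
  set R := Rgen p e a x with hR
  set A := ∑ i ∈ Finset.range e, ∑ j ∈ Finset.range (e - i), (a i * x ^ p ^ i * x) ^ p ^ j with hA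
  set B := ∑ i ∈ Finset.range e, (x * R) ^ p ^ i with hB
  have hf : fgen p e a x x = -(A + B) := by
    rw [fgen, Finset.sum_add_distrib, ← hR, hA, hB]
  have hfp : fgen p e a x x ^ p = -(A ^ p + B ^ p) := by
    rw [hf, ← hφ, map_neg, map_add, hφ, hφ]
  have hAp : A ^ p - A = ∑ i ∈ Finset.range e,
      ((a i * x ^ p ^ i * x) ^ p ^ (e - i) - a i * x ^ p ^ i * x) := by
    rw [hA, ← hφ, map_sum, ← Finset.sum_sub_distrib]
    refine Finset.sum_congr rfl fun i _ => ?_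
    rw [hφ]
    exact telescope p₀ n p hp₀ hpn _ _
  have hBp : B ^ p - B = (x * R) ^ p ^ e - x * R := telescope p₀ n p hp₀ hpn _ _
  have hsum1 : ∑ i ∈ Finset.range e, (a i * x ^ p ^ i * x) ^ p ^ (e - i)
      = (∑ i ∈ Finset.range e, (a i * x) ^ p ^ (e - i)) * x ^ p ^ e := by
    rw [Finset.sum_mul]
    refine Finset.sum_congr rfl fun i hi => ?_
    have hie : i ≤ e := le_of_lt (Finset.mem_range.mp hi)
    have h1 : a i * x ^ p ^ i * x = (a i * x) * x ^ p ^ i := by ring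
    rw [h1, mul_pow, ← pow_mul, ← pow_add, Nat.add_sub_cancel' hie]
  have hsum2 : ∑ i ∈ Finset.range e, (a i * x ^ p ^ i * x)
      = (R - a e * x ^ p ^ e) * x := by
    rw [hR, Rgen, Finset.sum_range_succ, add_sub_cancel_right, Finset.sum_mul]
  have hS : ∑ i ∈ Finset.range e, (a i * x) ^ p ^ (e - i)
      = Egen p e a x - R ^ p ^ e - a e * x := by
    have h1 : ∑ i ∈ Finset.range (e + 1), (a i * x) ^ p ^ (e - i)
        = ∑ i ∈ Finset.range e, (a i * x) ^ p ^ (e - i) + a e * x := by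
      rw [Finset.sum_range_succ, Nat.sub_self, pow_zero, pow_one]
    rw [Egen, ← hR, h1]
    ring
  have hAp' : A ^ p - A
      = (Egen p e a x - R ^ p ^ e - a e * x) * x ^ p ^ e - (R - a e * x ^ p ^ e) * x := by
    rw [hAp, Finset.sum_sub_distrib, hsum1, hsum2, hS]
  have final : fgen p e a x x ^ p - fgen p e a x x
      = -((A ^ p - A) + (B ^ p - B)) := by
    rw [hfp, hf]; ring
  rw [final, hAp', hBp, mul_pow]
  ring

lemma map_Rgen {F K : Type*} [CommRing F] [CommRing K] (g : F →+* K) (p e : ℕ)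
    (a : ℕ → F) (x : F) :
    g (Rgen p e a x) = Rgen p e (fun i => g (a i)) (g x) := by
  simp [Rgen, map_sum, map_mul, map_pow]

lemma map_Egen {F K : Type*} [CommRing F] [CommRing K] (g : F →+* K) (p e : ℕ)
    (a : ℕ → F) (x : F) :
    g (Egen p e a x) = Egen p e (fun i => g (a i)) (g x) := by
  simp [Egen, map_Rgen, map_sum, map_mul, map_pow, map_add]

/-- for `p` odd, if `a ∈ F_q` satisfies `E_R(a) = 0` then `b := f_R(a,a)/2`
lies in `F_q` and satisfies `b^p − b = a·R(a)`; in particular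
`(a, f_R(a,a)/2) ∈ H_R ∩ (F_q × F_q)`. -/
theorem statement4 {F K : Type*} [Field F] [Fintype F] [Field K] [IsAlgClosed K] [Algebra F K]
    (p₀ n p s q e : ℕ) (hp₀ : p₀.Prime) (hodd : Odd p₀) [CharP F p₀]
    (hn : 0 < n) (hpn : p = p₀ ^ n) (hs : 0 < s) (hq : q = p ^ s)
    (hcard : Fintype.card F = q) (a : ℕ → F) (hae : a e ≠ 0)
    (α : F) (hα : Egen p e a α = 0) :
    (fgen p e a α α / 2) ^ p - fgen p e a α α / 2 = α * Rgen p e a α ∧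
    (algebraMap F K α, algebraMap F K (fgen p e a α α / 2)) ∈
      Hset p e (fun i => algebraMap F K (a i)) := by
  haveI := Fact.mk hp₀
  have hp2 : p₀ ≠ 2 := by rintro rfl; simp [Nat.odd_iff] at hodd
  have h2 : (2 : F) ≠ 0 := by
    intro h
    have hd : p₀ ∣ 2 := (CharP.cast_eq_zero_iff F p₀ 2).mp (by exact_mod_cast h)
    exact hp2 ((Nat.prime_dvd_prime_iff_eq hp₀ Nat.prime_two).mp hd)
  have h2p : (2 : F) ^ p = 2 := by
    have hφ : iterateFrobenius F p₀ n (2 : F) = (2 : F) ^ p := by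
      rw [iterateFrobenius_def, hpn]
    rw [← hφ, map_ofNat]
  have hmc := main_calc p₀ n p e hp₀ hpn a α
  rw [hα, mul_zero, sub_zero] at hmc
  have first : (fgen p e a α α / 2) ^ p - fgen p e a α α / 2 = α * Rgen p e a α := by
    rw [div_pow, h2p, div_sub_div_same, hmc, mul_div_cancel_left₀ _ h2]
  refine ⟨first, ?_, ?_⟩
  · show Egen p e (fun i => algebraMap F K (a i)) (algebraMap F K α) = 0
    rw [← map_Egen, hα, map_zero]
  · show (algebraMap F K (fgen p e a α α / 2)) ^ p - algebraMap F K (fgen p e a α α / 2)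
      = algebraMap F K α * Rgen p e (fun i => algebraMap F K (a i)) (algebraMap F K α)
    rw [← map_pow, ← map_sub, first, map_mul, map_Rgen]
end

section
/- Assume p is odd. Let ξ : K^× → ℂ^× be a group homomorphism that is trivial on U_K^3. Let γ = Σ_{i ≥ −3} g_i t^i ∈ K^× with g_{−3} ≠ 0 be such that ξ(1 + x + x²/2) = Ψ(γx) for all x ∈ m_K. Define the Gauss sum τ(ξ,Ψ) := q^{−1} Σ_{ζ ∈ F_q^×} Σ_{a,b ∈ F_q} ξ^{−1}(γ·ζ(1+at+bt²))·Ψ(γ·ζ(1+at+bt²)) (the elements ζ(1+at+bt²) form a set of representatives of O_K^×/U_K^3). Then τ(ξ,Ψ) = ξ(γ)^{−1}·Ψ(γ)·Σ_{u ∈ F_q} ψ_{F_q}(g_{−3}·u²/2). -/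
open Finset

private lemma auxOrderZero {F : Type*} [Field F] {x : LaurentSeries F} (h0 : x.coeff 0 ≠ 0)
    (hneg : ∀ j : ℤ, j < 0 → x.coeff j = 0) : x.order = 0 := by
  have hx : x ≠ 0 := fun h => h0 (by simp [h])
  refine le_antisymm (HahnSeries.order_le_of_coeff_ne_zero h0) ?_
  by_contra h
  exact (HahnSeries.coeff_order_eq_zero.not.mpr hx) (hneg _ (lt_of_not_ge h))

private lemma auxCoeffLt {F : Type*} [Field F] {u h : LaurentSeries F} (hu : u ≠ 0)
    (huo : u.order = 0) (hh : ∀ j : ℤ, j < 3 → h.coeff j = 0) :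
    ∀ j : ℤ, j < 3 → (u⁻¹ * h).coeff j = 0 := by
  intro j hj
  rcases eq_or_ne h 0 with rfl | hne
  · simp
  · apply HahnSeries.coeff_eq_zero_of_lt_order
    have hui : u⁻¹ ≠ 0 := inv_ne_zero hu
    have h1 : u.order + u⁻¹.order = 0 := by
      rw [← HahnSeries.order_mul hu hui, mul_inv_cancel₀ hu, HahnSeries.order_one]
    have h2 : u⁻¹.order = 0 := by rw [huo, zero_add] at h1; exact h1
    have h3 : (3 : ℤ) ≤ h.order := by
      by_contra hc
      exact (HahnSeries.coeff_order_eq_zero.not.mpr hne) (hh _ (lt_of_not_ge hc))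
    rw [HahnSeries.order_mul hui hne, h2, zero_add]
    omega

private lemma auxSingleAdd {F : Type*} [Field F] (k : ℤ) (r s : F) :
    HahnSeries.single k (r + s) = HahnSeries.single k r + HahnSeries.single k s := by
  ext j; by_cases h : j = k <;> simp [HahnSeries.coeff_single, h]

/-- evaluation of the Gauss sum `τ(ξ,Ψ)` for a character `ξ` of `K^×`
(`K = F_q((t))`) trivial on `U_K^3`, with `Sw(ξ)` generated by `γ ∈ m_K^{-3} ∖ m_K^{-2}`:
`τ(ξ,Ψ) = ξ(γ)⁻¹ · Ψ(γ) · Σ_{u ∈ F_q} ψ_{F_q}(g_{−3} u²/2)`. -/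
theorem statement6 {Fp F : Type*} [Field Fp] [Fintype Fp] [Field F] [Fintype F] [DecidableEq F] [Algebra Fp F]
    (p₀ n p s q e : ℕ) (hp₀ : p₀.Prime) (hodd : Odd p₀) [CharP F p₀]
    (hn : 0 < n) (hpn : p = p₀ ^ n) (hs : 0 < s) (hq : q = p ^ s)
    (hcardp : Fintype.card Fp = p) (hcard : Fintype.card F = q)
    -- a nontrivial additive character `ψ` of `F_p`, and `Ψ(x) := ψ(Tr_{F_q/F_p}(res(x dt)))`
    (ψ : AddChar Fp ℂ) (hψ : ∃ x : Fp, ψ x ≠ 1)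
    -- `ξ : K^× → ℂ^×` a group homomorphism, trivial on `U_K^3`
    (ξ : LaurentSeries F → ℂ)
    (hξmul : ∀ x y : LaurentSeries F, x ≠ 0 → y ≠ 0 → ξ (x * y) = ξ x * ξ y)
    (hξne : ∀ x : LaurentSeries F, x ≠ 0 → ξ x ≠ 0) (hξone : ξ 1 = 1)
    (hξU3 : ∀ x : LaurentSeries F, (∀ j : ℤ, j < 3 → x.coeff j = 0) → ξ (1 + x) = 1)
    -- `γ = Σ_{i ≥ −3} g_i t^i` with `g_{−3} ≠ 0`
    (γ : LaurentSeries F) (hγ3 : γ.coeff (-3) ≠ 0) (hγlow : ∀ j : ℤ, j < -3 → γ.coeff j = 0)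
    -- `ξ(1 + x + x²/2) = Ψ(γ x)` for all `x ∈ m_K`
    (hγξ : ∀ x : LaurentSeries F, (∀ j : ℤ, j < 1 → x.coeff j = 0) →
      ξ (1 + x + x ^ 2 / 2) = ψ (Algebra.trace Fp F ((γ * x).coeff (-1)))) :
    -- `τ(ξ,Ψ) = ξ(γ)⁻¹ Ψ(γ) Σ_u ψ_{F_q}(g_{−3} u²/2)`
    (q : ℂ)⁻¹ * ∑ ζ : Fˣ, ∑ a : F, ∑ b : F,
        (ξ (γ * (HahnSeries.C (ζ : F) *
            (1 + HahnSeries.single 1 a + HahnSeries.single 2 b))))⁻¹ *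
          ψ (Algebra.trace Fp F ((γ * (HahnSeries.C (ζ : F) *
            (1 + HahnSeries.single 1 a + HahnSeries.single 2 b))).coeff (-1)))
      = (ξ γ)⁻¹ * ψ (Algebra.trace Fp F (γ.coeff (-1))) *
          ∑ u : F, ψ (Algebra.trace Fp F (γ.coeff (-3) * u ^ 2 / 2)) := by
  classical
  -- the additive character Φ of F
  set Φ : AddChar F ℂ := ψ.compAddMonoidHom (Algebra.trace Fp F).toAddMonoidHom with hΦdef
  have hΦ : ∀ y : F, ψ (Algebra.trace Fp F y) = Φ y := fun y => rfl
  -- characteristic facts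
  have hp2 : p₀ ≠ 2 := by
    intro h; rw [h] at hodd; exact (Nat.not_odd_iff_even.mpr (by norm_num)) hodd
  have h2 : (2 : F) ≠ 0 := by
    intro hc
    have hdvd : p₀ ∣ 2 := (CharP.cast_eq_zero_iff F p₀ 2).mp (by exact_mod_cast hc)
    exact hp2 ((Nat.prime_dvd_prime_iff_eq hp₀ Nat.prime_two).mp hdvd)
  -- Φ is nontrivial
  have hΦ0 : Φ ≠ 0 := by
    obtain ⟨x0, hx0⟩ := hψ
    obtain ⟨y0, hy0⟩ := Algebra.trace_surjective Fp F x0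
    exact AddChar.ne_zero_iff.mpr ⟨y0, by rw [← hΦ, hy0]; exact hx0⟩
  have hΦne : ∀ y : F, Φ y ≠ 0 := fun y h0 => by
    have : Φ y * Φ (-y) = 1 := by
      rw [← AddChar.map_add_eq_mul, add_neg_cancel, AddChar.map_zero_eq_one]
    rw [h0, zero_mul] at this; exact zero_ne_one this
  have hΦsub : ∀ r s : F, (Φ s)⁻¹ * Φ r = Φ (r - s) := by
    intro r s
    have h1 : Φ s * Φ (r - s) = Φ r := by
      rw [← AddChar.map_add_eq_mul]; congr 1; ring
    rw [← h1, ← mul_assoc, inv_mul_cancel₀ (hΦne s), one_mul]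
  have hΦsum : ∀ c : F, c ≠ 0 → ∑ b : F, Φ (c * b) = 0 := by
    intro c hc
    calc ∑ b : F, Φ (c * b) = ∑ y : F, Φ y :=
          Fintype.sum_equiv (Equiv.mulLeft₀ c hc) _ _ (fun b => rfl)
      _ = 0 := AddChar.sum_eq_zero_iff_ne_zero.mpr hΦ0
  have hΦcard : ∑ _b : F, (1 : ℂ) = (q : ℂ) := by
    rw [Finset.sum_const, card_univ, hcard, nsmul_eq_mul, mul_one]
  have hqne : (q : ℂ) ≠ 0 := by
    have : 0 < q := by
      rw [hq, hpn]; exact pow_pos (pow_pos hp₀.pos n) s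
    exact_mod_cast this.ne'
  -- Laurent series facts
  have hγne : γ ≠ 0 := fun h => hγ3 (by simp [h])
  have h2K : (2 : LaurentSeries F) = HahnSeries.C (2 : F) := by rw [map_ofNat]
  have h2invK : ((2 : LaurentSeries F))⁻¹ = HahnSeries.C ((2 : F)⁻¹) := by
    refine inv_eq_of_mul_eq_one_right ?_
    rw [h2K, ← map_mul, mul_inv_cancel₀ h2, map_one]
  have hCmul' : ∀ (k : ℤ) (r : F),
      HahnSeries.single k r * HahnSeries.C ((2 : F)⁻¹) = HahnSeries.single k (r / 2) := by
    intro k r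
    rw [HahnSeries.C_apply, HahnSeries.single_mul_single, add_zero, ← div_eq_mul_inv]
  -- ξ is invariant by perturbations of high order
  have hU3' : ∀ u h : LaurentSeries F, u ≠ 0 → u.order = 0 → (∀ j : ℤ, j < 3 → h.coeff j = 0) →
      ξ (u + h) = ξ u := by
    intro u h hu huo hh
    have hch := auxCoeffLt hu huo hh
    have hmain : u + h = u * (1 + u⁻¹ * h) := by
      rw [mul_add, mul_one, ← mul_assoc, mul_inv_cancel₀ hu, one_mul]
    have hne1 : (1 + u⁻¹ * h : LaurentSeries F) ≠ 0 := by
      intro h0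
      have hc : ((1 : LaurentSeries F) + u⁻¹ * h).coeff 0 = 0 := by rw [h0]; simp
      rw [HahnSeries.coeff_add, hch 0 (by norm_num)] at hc
      simp [HahnSeries.coeff_one] at hc
    rw [hmain, hξmul u _ hu hne1, hξU3 _ hch, mul_one]
  -- the standard unit and its facts
  set U : F → F → LaurentSeries F := fun a b => 1 + HahnSeries.single 1 a + HahnSeries.single 2 b with hUdef
  have hUcoeff0 : ∀ a b, (U a b).coeff 0 = 1 := by
    intro a b
    simp only [hUdef]
    simp only [HahnSeries.coeff_add, HahnSeries.coeff_one, HahnSeries.coeff_single]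
    norm_num
  have hUneg : ∀ a b, ∀ j : ℤ, j < 0 → (U a b).coeff j = 0 := by
    intro a b j hj
    have h1 : j ≠ 0 := by omega
    have h2' : j ≠ 1 := by omega
    have h3' : j ≠ 2 := by omega
    simp only [hUdef]
    simp only [HahnSeries.coeff_add, HahnSeries.coeff_one, HahnSeries.coeff_single, if_neg h1,
      if_neg h2', if_neg h3']
    norm_num
  have hUne : ∀ a b, U a b ≠ 0 := by
    intro a b h
    have := hUcoeff0 a b
    rw [h] at this
    simp at this
  have hUord : ∀ a b, (U a b).order = 0 := fun a b =>
    auxOrderZero (by rw [hUcoeff0 a b]; exact one_ne_zero) (hUneg a b)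
  -- evaluation of ξ on the standard unit
  have hξU : ∀ a b : F, ξ (U a b) =
      Φ (γ.coeff (-2) * a + γ.coeff (-3) * (b - a ^ 2 / 2)) := by
    intro a b
    set c : F := b - a ^ 2 / 2 with hc
    set x : LaurentSeries F := HahnSeries.single 1 a + HahnSeries.single 2 c with hx
    have hxlow : ∀ j : ℤ, j < 1 → x.coeff j = 0 := by
      intro j hj
      have h1 : j ≠ 1 := by omega
      have h2' : j ≠ 2 := by omega
      simp [hx, HahnSeries.coeff_add, HahnSeries.coeff_single, h1, h2']
    have hγx : (γ * x).coeff (-1) = γ.coeff (-2) * a + γ.coeff (-3) * c := by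
      rw [hx, mul_add, HahnSeries.coeff_add]
      congr 1
      · simpa using HahnSeries.coeff_mul_single_add (a := (-2 : ℤ)) (b := 1) (r := a) (x := γ)
      · simpa using HahnSeries.coeff_mul_single_add (a := (-3 : ℤ)) (b := 2) (r := c) (x := γ)
    have hxsq : x ^ 2 = HahnSeries.single 2 (a * a) +
        (HahnSeries.single 3 (a * c) + HahnSeries.single 3 (c * a)) +
        HahnSeries.single 4 (c * c) := by
      rw [sq, hx, add_mul, mul_add, mul_add, HahnSeries.single_mul_single,
        HahnSeries.single_mul_single, HahnSeries.single_mul_single, HahnSeries.single_mul_single]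
      norm_num
      abel
    have hstep : (1 : LaurentSeries F) + x + x ^ 2 / 2 =
        U a b + (HahnSeries.single 3 ((a * c + c * a) / 2) +
          HahnSeries.single 4 ((c * c) / 2)) := by
      have e1 : c + (a * a) / 2 = b := by rw [hc]; ring
      rw [div_eq_mul_inv, h2invK, hxsq, add_mul, add_mul, add_mul, hCmul', hCmul', hCmul', hCmul']
      simp only [hUdef]
      rw [← e1, auxSingleAdd 2 c ((a * a) / 2), add_div (a*c) (c*a) 2,
        auxSingleAdd 3 ((a * c) / 2) ((c * a) / 2), hx]
      abel
    have hhi : ∀ j : ℤ, j < 3 →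
        (HahnSeries.single (3:ℤ) ((a * c + c * a) / 2) +
          HahnSeries.single 4 ((c * c) / 2)).coeff j = 0 := by
      intro j hj
      have h3' : j ≠ 3 := by omega
      have h4' : j ≠ 4 := by omega
      simp [HahnSeries.coeff_add, HahnSeries.coeff_single, h3', h4']
    have := hγξ x hxlow
    rw [hstep, hU3' _ _ (hUne a b) (hUord a b) hhi, hΦ, hγx] at this
    rw [this, hc]
  -- main coefficient computation
  have hCcoeff : ∀ (ζ : F) (y : LaurentSeries F) (m : ℤ), (HahnSeries.C ζ * y).coeff m = ζ * y.coeff m := by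
    intro ζ y m
    rw [HahnSeries.C_apply, HahnSeries.coeff_single_zero_mul]
  have hγU : ∀ a b : F, (γ * U a b).coeff (-1) =
      γ.coeff (-1) + (γ.coeff (-2) * a + γ.coeff (-3) * b) := by
    intro a b
    have e1 : (γ * HahnSeries.single (1:ℤ) a).coeff (-1) = γ.coeff (-2) * a := by
      simpa using HahnSeries.coeff_mul_single_add (a := (-2 : ℤ)) (b := 1) (r := a) (x := γ)
    have e2 : (γ * HahnSeries.single (2:ℤ) b).coeff (-1) = γ.coeff (-3) * b := by
      simpa using HahnSeries.coeff_mul_single_add (a := (-3 : ℤ)) (b := 2) (r := b) (x := γ)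
    simp only [hUdef]
    rw [mul_add, mul_add, mul_one, HahnSeries.coeff_add, HahnSeries.coeff_add, e1, e2]
    ring
  have hcoeffv : ∀ (ζ : Fˣ) (a b : F),
      (γ * (HahnSeries.C (ζ : F) * U a b)).coeff (-1) =
        (ζ : F) * (γ.coeff (-1) + (γ.coeff (-2) * a + γ.coeff (-3) * b)) := by
    intro ζ a b
    rw [mul_left_comm, hCcoeff, hγU]
  -- ξ of the summand
  have hξv : ∀ (ζ : Fˣ) (a b : F),
      ξ (γ * (HahnSeries.C (ζ : F) * U a b)) =
        ξ γ * (ξ (HahnSeries.C (ζ : F)) *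
          Φ (γ.coeff (-2) * a + γ.coeff (-3) * (b - a ^ 2 / 2))) := by
    intro ζ a b
    have hCne : (HahnSeries.C ((ζ : F)) : LaurentSeries F) ≠ 0 := HahnSeries.C_ne_zero (Units.ne_zero ζ)
    rw [hξmul γ _ hγne (mul_ne_zero hCne (hUne _ _)), hξmul _ _ hCne (hUne _ _), hξU]
  -- the summand in closed form
  have hsummand : ∀ (ζ : Fˣ) (a b : F),
      (ξ (γ * (HahnSeries.C (ζ : F) * U a b)))⁻¹ *
          Φ ((γ * (HahnSeries.C (ζ : F) * U a b)).coeff (-1)) =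
        (ξ γ)⁻¹ * (ξ (HahnSeries.C (ζ : F)))⁻¹ *
          (Φ ((ζ : F) * γ.coeff (-1) + ((ζ : F) - 1) * (γ.coeff (-2) * a) +
              γ.coeff (-3) * a ^ 2 / 2) *
            Φ ((((ζ : F) - 1) * γ.coeff (-3)) * b)) := by
    intro ζ a b
    rw [hξv, hcoeffv]
    have hCne : (HahnSeries.C ((ζ : F)) : LaurentSeries F) ≠ 0 := HahnSeries.C_ne_zero (Units.ne_zero ζ)
    rw [mul_inv, mul_inv]
    rw [mul_assoc ((ξ γ)⁻¹), mul_assoc ((ξ (HahnSeries.C (ζ : F)))⁻¹), hΦsub]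
    rw [← AddChar.map_add_eq_mul]
    rw [← mul_assoc]
    congr 1
    ring
  -- rewrite the big sum
  have hbig : ∀ ζ : Fˣ, (∑ a : F, ∑ b : F,
      (ξ (γ * (HahnSeries.C (ζ : F) * U a b)))⁻¹ *
        Φ ((γ * (HahnSeries.C (ζ : F) * U a b)).coeff (-1))) =
      (ξ γ)⁻¹ * (ξ (HahnSeries.C (ζ : F)))⁻¹ *
        ∑ a : F, (Φ ((ζ : F) * γ.coeff (-1) + ((ζ : F) - 1) * (γ.coeff (-2) * a) +
            γ.coeff (-3) * a ^ 2 / 2) *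
          ∑ b : F, Φ ((((ζ : F) - 1) * γ.coeff (-3)) * b)) := by
    intro ζ
    rw [Finset.mul_sum]
    refine Finset.sum_congr rfl fun a _ => ?_
    rw [Finset.mul_sum, Finset.mul_sum]
    exact Finset.sum_congr rfl fun b _ => by rw [hsummand, mul_assoc]
  have hzero : ∀ ζ : Fˣ, ζ ≠ 1 → (∑ a : F, ∑ b : F,
      (ξ (γ * (HahnSeries.C (ζ : F) * U a b)))⁻¹ *
        Φ ((γ * (HahnSeries.C (ζ : F) * U a b)).coeff (-1))) = 0 := by
    intro ζ hζ
    have hζ1 : (ζ : F) - 1 ≠ 0 := by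
      intro h
      exact hζ (Units.ext (by push_cast; linear_combination h))
    rw [hbig, hΦsum _ (mul_ne_zero hζ1 hγ3)]
    simp
  have hone : (∑ a : F, ∑ b : F,
      (ξ (γ * (HahnSeries.C ((1 : Fˣ) : F) * U a b)))⁻¹ *
        Φ ((γ * (HahnSeries.C ((1 : Fˣ) : F) * U a b)).coeff (-1))) =
      (ξ γ)⁻¹ * Φ (γ.coeff (-1)) * (q : ℂ) * ∑ u : F, Φ (γ.coeff (-3) * u ^ 2 / 2) := by
    rw [hbig]
    have hC1 : ξ (HahnSeries.C ((1 : Fˣ) : F)) = 1 := by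
      rw [Units.val_one, map_one, hξone]
    rw [hC1, inv_one, mul_one]
    have : ∀ a : F, Φ (((1 : Fˣ) : F) * γ.coeff (-1) +
        (((1 : Fˣ) : F) - 1) * (γ.coeff (-2) * a) + γ.coeff (-3) * a ^ 2 / 2) *
        ∑ b : F, Φ (((((1 : Fˣ) : F) - 1) * γ.coeff (-3)) * b) =
        Φ (γ.coeff (-1)) * Φ (γ.coeff (-3) * a ^ 2 / 2) * (q : ℂ) := by
      intro a
      have e1 : ((1 : Fˣ) : F) * γ.coeff (-1) + (((1 : Fˣ) : F) - 1) * (γ.coeff (-2) * a) +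
          γ.coeff (-3) * a ^ 2 / 2 = γ.coeff (-1) + γ.coeff (-3) * a ^ 2 / 2 := by
        push_cast; ring
      have e2 : ∀ b : F, ((((1 : Fˣ) : F) - 1) * γ.coeff (-3)) * b = 0 := by
        intro b; push_cast; ring
      rw [e1, AddChar.map_add_eq_mul]
      have : ∑ b : F, Φ (((((1 : Fˣ) : F) - 1) * γ.coeff (-3)) * b) = (q : ℂ) := by
        rw [Finset.sum_congr rfl fun b _ => by rw [e2 b, AddChar.map_zero_eq_one], hΦcard]
      rw [this]
    rw [Finset.sum_congr rfl fun a _ => this a]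
    rw [← Finset.sum_mul, ← Finset.mul_sum]
    ring
  -- putting it together
  simp only [hΦ]
  have hsum : (∑ ζ : Fˣ, ∑ a : F, ∑ b : F,
      (ξ (γ * (HahnSeries.C (ζ : F) * U a b)))⁻¹ *
        Φ ((γ * (HahnSeries.C (ζ : F) * U a b)).coeff (-1))) =
      (ξ γ)⁻¹ * Φ (γ.coeff (-1)) * (q : ℂ) * ∑ u : F, Φ (γ.coeff (-3) * u ^ 2 / 2) := by
    rw [Finset.sum_eq_single_of_mem (1 : Fˣ) (Finset.mem_univ _)
      (fun ζ _ hζ => hzero ζ hζ), hone]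
  rw [hsum, show ((ξ γ)⁻¹ * Φ (γ.coeff (-1)) * (q : ℂ) *
      ∑ u : F, Φ (γ.coeff (-3) * u ^ 2 / 2)) =
      (q : ℂ) * ((ξ γ)⁻¹ * Φ (γ.coeff (-1)) * ∑ u : F, Φ (γ.coeff (-3) * u ^ 2 / 2)) from by ring,
    ← mul_assoc, inv_mul_cancel₀ hqne, one_mul]
end

section
/- Assume p is odd and e ≥ 1. Let a ∈ V_R with a ≠ 0, b := f_R(a,a)/2, u(x) := x^p − a^{p−1}x, Δ_0(x) := −(x/a)·((b/a)x − f_R(x,a)), and let R_1 be the unique additive polynomial of degree p^{e−1} with x·R(x) = u(x)·R_1(u(x)) + Δ_0(x)^p − Δ_0(x). Let a' ∈ V_R with a' ≠ 0 and ω_R(a,a') = 0, where ω_R(a,a') := f_R(a,a') − f_R(a',a). Then the identity Δ_0(x + a') + f_{R_1}(u(x), u(a')) = Δ_0(x) + Δ_0(a') + f_R(x,a') holds in F̄[x], where f_{R_1} is the polynomial associated to R_1 by the same formula as f_R is associated to R. -/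
open Finset Polynomial

section maps
variable {A B : Type*} [CommRing A] [CommRing B] (φ : A →+* B) (p d : ℕ) (s : ℕ → A) (x y : A)

lemma Rgen_map : φ (Rgen p d s x) = Rgen p d (fun i => φ (s i)) (φ x) := by
  simp [Rgen, map_sum, map_mul, map_pow]

lemma Egen_map : φ (Egen p d s x) = Egen p d (fun i => φ (s i)) (φ x) := by
  simp [Egen, map_sum, map_mul, map_pow, Rgen_map]

lemma fgen_map : φ (fgen p d s x y) = fgen p d (fun i => φ (s i)) (φ x) (φ y) := by
  simp [fgen, map_sum, map_mul, map_pow, Rgen_map]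

lemma fgen_zero_left (hp : 0 < p) : fgen p d s 0 y = 0 := by
  simp [fgen, zero_pow (pow_ne_zero _ hp.ne')]
end maps

section char
variable {A : Type*} [CommRing A] {p₀ p n : ℕ} [ExpChar A p₀] (hp : p = p₀ ^ n)
include hp

lemma padd (x y : A) (i : ℕ) : (x + y) ^ p ^ i = x ^ p ^ i + y ^ p ^ i := by
  subst hp; rw [← pow_mul]; exact add_pow_expChar_pow x y p₀ (n*i)

lemma psub (x y : A) (i : ℕ) : (x - y) ^ p ^ i = x ^ p ^ i - y ^ p ^ i := by
  subst hp; rw [← pow_mul]; exact sub_pow_expChar_pow x y (n*i)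

lemma psum {ι : Type*} (t : Finset ι) (f : ι → A) (i : ℕ) :
    (∑ k ∈ t, f k) ^ p ^ i = ∑ k ∈ t, (f k) ^ p ^ i := by
  subst hp; rw [← pow_mul]; exact sum_pow_char_pow p₀ (n*i) t f

lemma padd1 (x y : A) : (x + y) ^ p = x ^ p + y ^ p := by
  have := padd hp x y 1; simpa using this

lemma psub1 (x y : A) : (x - y) ^ p = x ^ p - y ^ p := by
  have := psub hp x y 1; simpa using this

lemma psum1 {ι : Type*} (t : Finset ι) (f : ι → A) :
    (∑ k ∈ t, f k) ^ p = ∑ k ∈ t, (f k) ^ p := by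
  have := psum hp t f 1; simpa using this

omit hp in
lemma ppow (z : A) (i : ℕ) : (z ^ p ^ i) ^ p = z ^ p ^ (i + 1) := by
  rw [← pow_mul, ← pow_succ]

lemma Rgen_add (d : ℕ) (s : ℕ → A) (x y : A) :
    Rgen p d s (x + y) = Rgen p d s x + Rgen p d s y := by
  simp [Rgen, padd hp, mul_add, Finset.sum_add_distrib]

lemma fgen_add_left (d : ℕ) (s : ℕ → A) (x x' y : A) :
    fgen p d s (x + x') y = fgen p d s x y + fgen p d s x' y := by
  simp only [fgen, ← neg_add, ← Finset.sum_add_distrib]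
  congr 1
  apply Finset.sum_congr rfl
  intro i _
  rw [padd hp x x' i]
  have h1 : ∀ j, (s i * (x ^ p ^ i + x' ^ p ^ i) * y) ^ p ^ j
      = (s i * x ^ p ^ i * y) ^ p ^ j + (s i * x' ^ p ^ i * y) ^ p ^ j := by
    intro j
    rw [show s i * (x ^ p ^ i + x' ^ p ^ i) * y
      = s i * x ^ p ^ i * y + s i * x' ^ p ^ i * y by ring, padd hp]
  rw [show (x + x') * Rgen p d s y
    = x * Rgen p d s y + x' * Rgen p d s y by ring, padd hp]
  simp only [h1, Finset.sum_add_distrib]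
  ring

lemma star (hodd : Odd p) (d : ℕ) (s : ℕ → A) (x y : A) :
    fgen p d s x y ^ p - fgen p d s x y
      = x * Rgen p d s y + y * Rgen p d s x - x ^ p ^ d * Egen p d s y := by
  set t : ℕ → A := fun i => s i * x ^ p ^ i * y with ht
  set v : A := x * Rgen p d s y with hv
  set T : ℕ → A := fun i => ∑ j ∈ range (d - i), t i ^ p ^ j with hT
  set S : A := ∑ i ∈ range d, (T i + v ^ p ^ i) with hS
  have hfgen : fgen p d s x y = -S := rfl
  have hTp : ∀ i, (T i) ^ p - T i = t i ^ p ^ (d - i) - t i := by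
    intro i
    have h1 : (T i) ^ p = ∑ j ∈ range (d - i), t i ^ p ^ (j + 1) := by
      rw [hT]; rw [psum1 hp]
      exact Finset.sum_congr rfl fun j _ => ppow _ _
    rw [h1, hT, ← Finset.sum_sub_distrib,
      Finset.sum_range_sub (fun j => t i ^ p ^ j), pow_zero, pow_one]
  have hmain : S ^ p - S = (∑ i ∈ range d, (t i ^ p ^ (d - i) - t i)) + (v ^ p ^ d - v) := by
    rw [hS, psum1 hp, ← Finset.sum_sub_distrib]
    have h2 : ∀ i ∈ range d, (T i + v ^ p ^ i) ^ p - (T i + v ^ p ^ i)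
        = (t i ^ p ^ (d - i) - t i) + (v ^ p ^ (i + 1) - v ^ p ^ i) := by
      intro i _
      rw [padd1 hp, ppow, ← hTp i]; ring
    rw [Finset.sum_congr rfl h2, Finset.sum_add_distrib,
      Finset.sum_range_sub (fun i => v ^ p ^ i), pow_zero, pow_one]
  have hA : ∑ i ∈ range d, t i ^ p ^ (d - i)
      = x ^ p ^ d * ∑ i ∈ range d, (s i * y) ^ p ^ (d - i) := by
    rw [Finset.mul_sum]
    refine Finset.sum_congr rfl fun i hi => ?_
    have hid : p ^ i * p ^ (d - i) = p ^ d := by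
      rw [← pow_add]; congr 1; exact Nat.add_sub_cancel' (Nat.le_of_lt (Finset.mem_range.mp hi))
    calc t i ^ p ^ (d - i) = (s i * y) ^ p ^ (d - i) * (x ^ p ^ i) ^ p ^ (d - i) := by
          rw [ht, ← mul_pow]; ring_nf
      _ = x ^ p ^ d * (s i * y) ^ p ^ (d - i) := by rw [← pow_mul, hid]; ring
  have hB : ∑ i ∈ range d, t i = y * (Rgen p d s x - s d * x ^ p ^ d) := by
    have h3 : Rgen p d s x - s d * x ^ p ^ d = ∑ i ∈ range d, s i * x ^ p ^ i := by
      rw [Rgen, Finset.sum_range_succ]; ring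
    rw [h3, Finset.mul_sum]
    exact Finset.sum_congr rfl fun i _ => by rw [ht]; ring
  have hE : Egen p d s y = Rgen p d s y ^ p ^ d
      + (∑ i ∈ range d, (s i * y) ^ p ^ (d - i)) + s d * y := by
    rw [Egen, Finset.sum_range_succ, Nat.sub_self, pow_zero, pow_one]; ring
  have hvp : v ^ p ^ d = x ^ p ^ d * Rgen p d s y ^ p ^ d := by rw [hv, mul_pow]
  rw [hfgen, Odd.neg_pow hodd]
  rw [Finset.sum_sub_distrib, hA, hB] at hmain
  linear_combination (-1 : A) * hmain + x ^ p ^ d * hE - hvp + hv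
end char

section addp
variable {K : Type*} [CommRing K]

def AddP (p e : ℕ) (P : Polynomial K) : Prop :=
  ∃ b : ℕ → K, P = ∑ k ∈ Finset.range e, C (b k) * X ^ p ^ k

variable {p e : ℕ}

lemma AddP.zero : AddP p e (0 : Polynomial K) := ⟨fun _ => 0, by simp⟩

lemma AddP.add {P Q : Polynomial K} (hP : AddP p e P) (hQ : AddP p e Q) : AddP p e (P + Q) := by
  obtain ⟨b, hb⟩ := hP; obtain ⟨b', hb'⟩ := hQ
  exact ⟨fun k => b k + b' k, by simp [hb, hb', Finset.sum_add_distrib, add_mul]⟩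

lemma AddP.neg {P : Polynomial K} (hP : AddP p e P) : AddP p e (-P) := by
  obtain ⟨b, hb⟩ := hP
  exact ⟨fun k => -b k, by simp [hb, ← Finset.sum_neg_distrib, neg_mul]⟩

lemma AddP.sub {P Q : Polynomial K} (hP : AddP p e P) (hQ : AddP p e Q) : AddP p e (P - Q) := by
  rw [sub_eq_add_neg]; exact hP.add hQ.neg

lemma AddP.Cmul {P : Polynomial K} (z : K) (hP : AddP p e P) : AddP p e (C z * P) := by
  obtain ⟨b, hb⟩ := hP
  exact ⟨fun k => z * b k, by simp [hb, Finset.mul_sum, map_mul, mul_assoc]⟩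

lemma sum_ite_single (z : K) (m N : ℕ) (hm : m < N) :
    ∑ k ∈ Finset.range N, C (if k = m then z else 0) * X ^ p ^ k = C z * X ^ p ^ m := by
  have h : ∀ k ∈ Finset.range N, C (if k = m then z else 0) * X ^ p ^ k
      = if k = m then C z * X ^ p ^ k else 0 := by
    intro k _; split <;> simp
  rw [Finset.sum_congr rfl h, Finset.sum_ite_eq' (Finset.range N) m
    (fun k => C z * X ^ p ^ k), if_pos (Finset.mem_range.mpr hm)]

lemma AddP.mono (z : K) {m : ℕ} (hm : m < e) : AddP p e (C z * X ^ p ^ m : Polynomial K) :=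
  ⟨fun k => if k = m then z else 0, (sum_ite_single z m e hm).symm⟩

lemma AddP.sum {ι : Type*} {t : Finset ι} {f : ι → Polynomial K}
    (h : ∀ i ∈ t, AddP p e (f i)) : AddP p e (∑ i ∈ t, f i) := by
  classical
  induction t using Finset.induction with
  | empty => simpa using AddP.zero
  | insert _ _ hx ih =>
    rw [Finset.sum_insert hx]
    exact (h _ (Finset.mem_insert_self _ _)).add
      (ih fun i hi => h i (Finset.mem_insert_of_mem hi))

lemma AddP_fgen (d : ℕ) (s : ℕ → K) (z : K) (q : Polynomial K)
    (hq : ∀ m, m < d → AddP p e (q ^ p ^ m)) :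
    AddP p e (fgen p d (fun i => C (s i)) q (C z)) := by
  refine AddP.neg (AddP.sum fun i hi => AddP.add (AddP.sum fun j hj => ?_) ?_)
  · have h1 : C (s i) * q ^ p ^ i * C z = C (s i * z) * q ^ p ^ i := by
      rw [map_mul]; ring
    have h2 : (C (s i) * q ^ p ^ i * C z) ^ p ^ j = C ((s i * z) ^ p ^ j) * q ^ p ^ (i + j) := by
      rw [h1, mul_pow, map_pow, ← pow_mul, ← pow_add]
    rw [h2]
    exact AddP.Cmul _ (hq (i + j) (by
      have h5 := Finset.mem_range.mp hi; have h6 := Finset.mem_range.mp hj; omega))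
  · have h3 : q * Rgen p d (fun i => C (s i)) (C z) = C (Rgen p d s z) * q := by
      rw [← Rgen_map (C : K →+* Polynomial K)]; ring
    have h4 : (q * Rgen p d (fun i => C (s i)) (C z)) ^ p ^ i
        = C ((Rgen p d s z) ^ p ^ i) * q ^ p ^ i := by
      rw [h3, mul_pow, map_pow]
    rw [h4]
    exact AddP.Cmul _ (hq i (Finset.mem_range.mp hi))

lemma AddP_coeff (hp2 : 2 ≤ p) (N : ℕ) (w : ℕ → K) (j : ℕ) :
    (∑ k ∈ Finset.range N, C (w k) * X ^ p ^ k).coeff (p ^ j) = if j < N then w j else 0 := by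
  rw [Polynomial.finset_sum_coeff]
  have h : ∀ k ∈ Finset.range N, (C (w k) * X ^ p ^ k).coeff (p ^ j)
      = if k = j then w k else 0 := by
    intro k _
    rw [Polynomial.coeff_C_mul, Polynomial.coeff_X_pow]
    by_cases hkj : k = j
    · subst hkj; simp
    · rw [if_neg (fun h => hkj (Nat.pow_right_injective hp2 h).symm), if_neg hkj, mul_zero]
  rw [Finset.sum_congr rfl h, Finset.sum_ite_eq' (Finset.range N) j w]
  simp [Finset.mem_range]

lemma master (hp2 : 2 ≤ p) (N : ℕ) (w : ℕ → K)
    (hE : ∑ k ∈ Finset.range N, C (w k) * X ^ p ^ k = 0) : ∀ j, j < N → w j = 0 := by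
  intro j hj
  have h := congrArg (fun q => Polynomial.coeff q (p ^ j)) hE
  simpa [AddP_coeff hp2 N w j, hj] using h
end addp


set_option maxHeartbeats 1600000 in
/-- with the notation of the quotient step, for `a' ∈ V_R ∖ {0}` with
`ω_R(a,a') = 0`, the identity
`Δ₀(x + a') + f_{R₁}(u(x), u(a')) = Δ₀(x) + Δ₀(a') + f_R(x,a')` holds in `F̄[x]`. -/
theorem statement8 {F K : Type*} [Field F] [Fintype F] [Field K] [IsAlgClosed K] [Algebra F K]
    (p₀ n p s q e : ℕ) (hp₀ : p₀.Prime) (hodd : Odd p₀) [CharP F p₀]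
    (hn : 0 < n) (hpn : p = p₀ ^ n) (hs : 0 < s) (hq : q = p ^ s)
    (hcard : Fintype.card F = q) (a : ℕ → F) (hae : a e ≠ 0) (he : 1 ≤ e)
    (α : K) (hαV : Egen p e (fun i => algebraMap F K (a i)) α = 0) (hα0 : α ≠ 0)
    -- `R₁(z) = ∑_{i=0}^{e-1} c_i z^{p^i}` is the additive polynomial of the quotient step
    (c : ℕ → K)
    (hc : Polynomial.X * Rgen p e (fun i => Polynomial.C (algebraMap F K (a i))) Polynomial.X =
      (Polynomial.X ^ p - Polynomial.C (α ^ (p - 1)) * Polynomial.X) *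
        Rgen p (e - 1) (fun i => Polynomial.C (c i))
          (Polynomial.X ^ p - Polynomial.C (α ^ (p - 1)) * Polynomial.X) +
      (-(Polynomial.C α⁻¹ * Polynomial.X) *
        (Polynomial.C (fgen p e (fun i => algebraMap F K (a i)) α α / 2 / α) * Polynomial.X -
          fgen p e (fun i => Polynomial.C (algebraMap F K (a i))) Polynomial.X
            (Polynomial.C α))) ^ p -
      -(Polynomial.C α⁻¹ * Polynomial.X) *
        (Polynomial.C (fgen p e (fun i => algebraMap F K (a i)) α α / 2 / α) * Polynomial.X -
          fgen p e (fun i => Polynomial.C (algebraMap F K (a i))) Polynomial.X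
            (Polynomial.C α)))
    (α' : K) (hα'V : Egen p e (fun i => algebraMap F K (a i)) α' = 0) (hα'0 : α' ≠ 0)
    (hω : fgen p e (fun i => algebraMap F K (a i)) α α' =
      fgen p e (fun i => algebraMap F K (a i)) α' α) :
    let aK : ℕ → K := fun i => algebraMap F K (a i)
    let aP : ℕ → Polynomial K := fun i => Polynomial.C (aK i)
    let cP : ℕ → Polynomial K := fun i => Polynomial.C (c i)
    let u : Polynomial K := Polynomial.X ^ p - Polynomial.C (α ^ (p - 1)) * Polynomial.X
    let Δ₀ : Polynomial K := -(Polynomial.C α⁻¹ * Polynomial.X) *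
      (Polynomial.C (fgen p e aK α α / 2 / α) * Polynomial.X -
        fgen p e aP Polynomial.X (Polynomial.C α))
    Δ₀.comp (Polynomial.X + Polynomial.C α') +
        fgen p (e - 1) cP u (Polynomial.C (α' ^ p - α ^ (p - 1) * α')) =
      Δ₀ + Polynomial.C (Δ₀.eval α') + fgen p e aP Polynomial.X (Polynomial.C α') := by
  intro aK aP cP u Δ₀
  -- characteristic setup
  haveI hK : CharP K p₀ := charP_of_injective_algebraMap (algebraMap F K).injective p₀
  haveI : Fact p₀.Prime := ⟨hp₀⟩
  haveI : CharP (Polynomial K) p₀ := charP_of_injective_ringHom (Polynomial.C_injective) p₀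
  have hp2 : 2 ≤ p := by
    calc 2 ≤ p₀ := hp₀.two_le
    _ ≤ p₀ ^ n := Nat.le_self_pow hn.ne' p₀
    _ = p := hpn.symm
  have hp0 : 0 < p := by omega
  have hpodd : Odd p := by rw [hpn]; exact hodd.pow
  have h2K : (2 : K) ≠ 0 := by
    have hnd : ¬ (p₀ ∣ 2) := by
      intro hdvd
      have h22 := (Nat.prime_dvd_prime_iff_eq hp₀ Nat.prime_two).mp hdvd
      rw [h22] at hodd
      exact (by decide : ¬ Odd 2) hodd
    intro h20
    exact hnd ((CharP.cast_eq_zero_iff K p₀ 2).mp (by exact_mod_cast h20))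
  -- abbreviations
  set τ : Polynomial K := X + C α' with hτ
  set β' : K := α' ^ p - α ^ (p - 1) * α' with hβ'
  set b0 : K := fgen p e aK α α / 2 / α with hb0
  set L : Polynomial K := C b0 * X - fgen p e aP X (C α) with hL
  have hΔ : Δ₀ = -(C α⁻¹ * X) * L := rfl
  set R' : Polynomial K := Rgen p e aP X with hR'
  set R1u : Polynomial K := Rgen p (e - 1) cP u with hR1
  set fα' : Polynomial K := fgen p e aP X (C α') with hfa'
  set f₁ : Polynomial K := fgen p (e - 1) cP u (C β') with hf1
  set s' : K := Egen p (e - 1) c β' with hs'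
  -- the basic relation from hc
  have hc' : X * R' = u * R1u + Δ₀ ^ p - Δ₀ := hc
  have hD : Δ₀ ^ p - Δ₀ = X * R' - u * R1u := by linear_combination -hc'
  -- the composition ring hom
  set φτ : Polynomial K →+* Polynomial K := eval₂RingHom Polynomial.C τ with hφτ
  have φτC : ∀ z : K, φτ (C z) = C z := fun z => eval₂_C _ _
  have φτX : φτ X = τ := eval₂_X _ _
  have φτcomp : ∀ Q : Polynomial K, Q.comp τ = φτ Q := fun Q => rfl
  have haPφ : (fun i => φτ (aP i)) = aP := funext fun i => φτC _
  have hcPφ : (fun i => φτ (cP i)) = cP := funext fun i => φτC _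
  -- composition identities
  have hRτ : φτ R' = R' + C (Rgen p e aK α') := by
    rw [hR', Rgen_map φτ p e aP X, haPφ, φτX, hτ, Rgen_add hpn]
    congr 1
    exact (Rgen_map (C : K →+* Polynomial K) p e aK α').symm
  have huτ : φτ u = u + C β' := by
    have : φτ u = τ ^ p - C (α ^ (p - 1)) * τ := by
      show φτ (X ^ p - C (α ^ (p - 1)) * X) = _
      rw [map_sub, map_mul, map_pow, φτX, φτC]
    rw [this, hτ, padd1 hpn, ← map_pow, hβ']
    rw [show u = X ^ p - C (α ^ (p - 1)) * X from rfl]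
    rw [map_sub, map_mul]
    ring
  have hR1τ : φτ R1u = R1u + C (Rgen p (e - 1) c β') := by
    rw [hR1, Rgen_map φτ p (e - 1) cP u, hcPφ, huτ, Rgen_add hpn]
    congr 1
    exact (Rgen_map (C : K →+* Polynomial K) p (e - 1) c β').symm
  have hDτp : (Δ₀.comp τ) ^ p - Δ₀.comp τ
      = τ * (R' + C (Rgen p e aK α')) - (u + C β') * (R1u + C (Rgen p (e - 1) c β')) := by
    have h := congrArg φτ hD
    simp only [map_sub, map_mul, map_pow] at h
    rw [φτX, hRτ, huτ, hR1τ] at h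
    rw [φτcomp]
    exact h
  -- the evaluation of hD at α'
  have hRev : ∀ z : K, (evalRingHom z) R' = Rgen p e aK z := by
    intro z
    rw [hR', Rgen_map (evalRingHom z) p e aP X]
    simp [Rgen, aP, aK]
  have huev : (evalRingHom α') u = β' := by
    show eval α' (X ^ p - C (α ^ (p - 1)) * X) = β'
    simp [hβ']
  have hR1ev : (evalRingHom α') R1u = Rgen p (e - 1) c β' := by
    rw [hR1, Rgen_map (evalRingHom α') p (e - 1) cP u, huev]
    simp [Rgen, cP]
  have hval : (Δ₀.eval α') ^ p - Δ₀.eval α'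
      = α' * Rgen p e aK α' - β' * Rgen p (e - 1) c β' := by
    have h := congrArg (evalRingHom α') hD
    simp only [map_sub, map_mul, map_pow] at h
    rw [hRev α', huev, hR1ev] at h
    simpa using h
  have hCval : (C (Δ₀.eval α')) ^ p - C (Δ₀.eval α')
      = C α' * C (Rgen p e aK α') - C β' * C (Rgen p (e - 1) c β') := by
    have h := congrArg (C : K →+* Polynomial K) hval
    simp only [map_sub, map_mul, map_pow] at h
    exact h
  -- star identities
  have hRconst : Rgen p e aP (C α') = C (Rgen p e aK α') :=
    (Rgen_map (C : K →+* Polynomial K) p e aK α').symm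
  have hEzero : Egen p e aP (C α') = 0 := by
    calc Egen p e aP (C α')
        = C (Egen p e aK α') := (Egen_map (C : K →+* Polynomial K) p e aK α').symm
      _ = 0 := by rw [show Egen p e aK α' = 0 from hα'V, map_zero]
  have hfR : fα' ^ p - fα' = X * C (Rgen p e aK α') + C α' * R' := by
    have h := star hpn hpodd e aP X (C α')
    linear_combination h - (X : Polynomial K) ^ p ^ e * hEzero + (X : Polynomial K) * hRconst
  have hR1const : Rgen p (e - 1) cP (C β') = C (Rgen p (e - 1) c β') :=
    (Rgen_map (C : K →+* Polynomial K) p (e - 1) c β').symm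
  have hE1const : Egen p (e - 1) cP (C β') = C s' :=
    (Egen_map (C : K →+* Polynomial K) p (e - 1) c β').symm
  have hf₁ : f₁ ^ p - f₁ = u * C (Rgen p (e - 1) c β') + C β' * R1u - u ^ p ^ (e - 1) * C s' := by
    have h := star hpn hpodd (e - 1) cP u (C β')
    linear_combination h + u * hR1const - u ^ p ^ (e - 1) * hE1const
  -- the big polynomial P
  rw [← sub_eq_zero]
  set P : Polynomial K := Δ₀.comp τ + f₁ - (Δ₀ + C (Δ₀.eval α') + fα') with hPdef
  have hPp : P ^ p = (Δ₀.comp τ) ^ p + f₁ ^ p - (Δ₀ ^ p + (C (Δ₀.eval α')) ^ p + fα' ^ p) := by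
    rw [hPdef]
    simp only [psub1 hpn, padd1 hpn]
  have Hpe : P ^ p - P = -(u ^ p ^ (e - 1) * C s') := by
    rw [hPp, hPdef]
    linear_combination hDτp + hf₁ - hD - hCval - hfR
  -- the quadratic-expansion form of P
  set g : K := fgen p e aK α' α with hg
  set lam : K := b0 * α' - g with hlam
  have hfcomp : φτ (fgen p e aP X (C α)) = fgen p e aP X (C α) + C g := by
    rw [fgen_map φτ p e aP X (C α), haPφ, φτX, φτC, hτ, fgen_add_left hpn]
    congr 1
    exact (fgen_map (C : K →+* Polynomial K) p e aK α' α).symm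
  have hLτ : φτ L = L + C lam := by
    rw [hL, map_sub, map_mul, φτC, φτX, hfcomp, hτ, hlam, map_sub, map_mul]
    ring
  have hDτ2 : Δ₀.comp τ = -(C α⁻¹ * τ) * (L + C lam) := by
    rw [φτcomp, hΔ, map_mul, map_neg, map_mul, φτC, φτX, hLτ]
  have hLev' : (evalRingHom α') L = lam := by
    rw [hL, map_sub, map_mul]
    have : (evalRingHom α') (fgen p e aP X (C α)) = g := by
      rw [fgen_map (evalRingHom α') p e aP X (C α), hg]
      simp [fgen, Rgen, aP, aK]
    rw [this, hlam]
    simp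
  have hDev : Δ₀.eval α' = -(α⁻¹ * α') * lam := by
    have : Δ₀.eval α' = (evalRingHom α') Δ₀ := rfl
    rw [this, hΔ, map_mul, map_neg, map_mul, hLev']
    simp
  have hP2 : P = -(C (α⁻¹ * lam) * X) - C (α⁻¹ * α') * L + f₁ - fα' := by
    rw [hPdef, hDτ2, hDev, hΔ, hτ]
    simp only [map_mul, map_neg]
    ring
  -- P is an additive polynomial
  have hqX : ∀ m, m < e → AddP p e ((X : Polynomial K) ^ p ^ m) := by
    intro m hm
    have := AddP.mono (p := p) (1 : K) hm
    simpa using this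
  have hqu : ∀ m, m < e - 1 → AddP p e (u ^ p ^ m) := by
    intro m hm
    have hupow : u ^ p ^ m = X ^ p ^ (m + 1) - C ((α ^ (p - 1)) ^ p ^ m) * X ^ p ^ m := by
      rw [show u = X ^ p - C (α ^ (p - 1)) * X from rfl, psub hpn, mul_pow, ← map_pow,
        ← pow_mul, ← pow_succ']
    rw [hupow]
    refine AddP.sub ?_ (AddP.mono _ (by omega))
    have := AddP.mono (p := p) (1 : K) (show m + 1 < e by omega)
    simpa using this
  have hAddP : AddP p e P := by
    rw [hP2]
    refine AddP.sub (AddP.add (AddP.sub ?_ ?_) ?_) ?_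
    · exact (by simpa using AddP.mono (α⁻¹ * lam) (show 0 < e by omega) :
        AddP p e (C (α⁻¹ * lam) * X)).neg
    · refine AddP.Cmul _ ?_
      rw [hL]
      refine AddP.sub ?_ (AddP_fgen e aK α X hqX)
      simpa using AddP.mono (p := p) b0 (show 0 < e by omega)
    · exact AddP_fgen (e - 1) c β' u hqu
    · exact AddP_fgen e aK α' X hqX
  obtain ⟨b, hbP⟩ := hAddP
  -- coefficient extraction
  set γ' : K := (α ^ (p - 1)) ^ p ^ (e - 1) with hγ'
  have huP : u ^ p ^ (e - 1) = X ^ p ^ e - C γ' * X ^ p ^ (e - 1) := by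
    rw [show u = X ^ p - C (α ^ (p - 1)) * X from rfl, psub hpn, mul_pow, ← map_pow,
      ← pow_mul, ← pow_succ', hγ', show e - 1 + 1 = e by omega]
  set w : ℕ → K := fun k => (if k = 0 then 0 else b (k - 1) ^ p) - (if k < e then b k else 0)
    + (if k = e then s' else 0) - (if k = e - 1 then s' * γ' else 0) with hw
  have hS1 : ∑ k ∈ Finset.range (e + 1), C (if k = 0 then (0:K) else b (k - 1) ^ p) * X ^ p ^ k
      = P ^ p := by
    rw [Finset.sum_range_succ']
    simp only [Nat.succ_ne_zero, if_neg, Nat.add_sub_cancel, if_pos rfl, reduceIte]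
    rw [map_zero, zero_mul, add_zero, hbP, psum1 hpn]
    exact Finset.sum_congr rfl fun k _ => by rw [mul_pow, ← map_pow, ppow]
  have hS2 : ∑ k ∈ Finset.range (e + 1), C (if k < e then b k else (0:K)) * X ^ p ^ k = P := by
    rw [Finset.sum_range_succ, if_neg (lt_irrefl e), map_zero, zero_mul, add_zero, hbP]
    exact Finset.sum_congr rfl fun k hk => by rw [if_pos (Finset.mem_range.mp hk)]
  have hE : ∑ k ∈ Finset.range (e + 1), C (w k) * X ^ p ^ k = 0 := by
    have hsplit : ∀ k ∈ Finset.range (e + 1), C (w k) * X ^ p ^ k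
        = (C (if k = 0 then (0:K) else b (k - 1) ^ p) * X ^ p ^ k
            - C (if k < e then b k else 0) * X ^ p ^ k
            + C (if k = e then s' else 0) * X ^ p ^ k)
            - C (if k = e - 1 then s' * γ' else 0) * X ^ p ^ k := by
      intro k _
      rw [hw]
      simp only [map_sub, map_add]
      ring
    rw [Finset.sum_congr rfl hsplit, Finset.sum_sub_distrib, Finset.sum_add_distrib,
      Finset.sum_sub_distrib, hS1, hS2,
      sum_ite_single s' e (e + 1) (by omega), sum_ite_single (s' * γ') (e - 1) (e + 1) (by omega)]
    rw [huP] at Hpe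
    rw [map_mul]
    linear_combination Hpe
  have hwzero := master hp2 (e + 1) w hE
  have hbsmall : ∀ k, k + 1 < e → b k = 0 := by
    intro k
    induction k with
    | zero =>
      intro h
      have h0 := hwzero 0 (by omega)
      simp only [hw, if_true] at h0
      rw [if_pos (show 0 < e by omega), if_neg (show ¬(0 = e) by omega),
        if_neg (show ¬(0 = e - 1) by omega)] at h0
      linear_combination -h0
    | succ k ih =>
      intro h
      have hk := ih (by omega)
      have h1 := hwzero (k + 1) (by omega)
      simp only [hw, Nat.add_sub_cancel] at h1
      rw [if_neg (show ¬(k + 1 = 0) by omega), if_pos (show k + 1 < e by omega),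
        if_neg (show ¬(k + 1 = e) by omega), if_neg (show ¬(k + 1 = e - 1) by omega)] at h1
      rw [hk, zero_pow hp0.ne'] at h1
      linear_combination -h1
  have hblast : P = C (b (e - 1)) * X ^ p ^ (e - 1) := by
    have hrange : Finset.range e = insert (e - 1) (Finset.range (e - 1)) := by
      conv_lhs => rw [show e = (e - 1) + 1 by omega]
      exact Finset.range_add_one
    have hz : ∑ k ∈ Finset.range (e - 1), C (b k) * X ^ p ^ k = 0 :=
      Finset.sum_eq_zero fun k hk => by
        rw [hbsmall k (by have := Finset.mem_range.mp hk; omega), map_zero, zero_mul]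
    rw [hbP, hrange, Finset.sum_insert Finset.notMem_range_self, hz, add_zero]
  -- evaluation of P at α using hω
  have hPα : P.eval α = 0 := by
    have huevα : (evalRingHom α) u = 0 := by
      show eval α (X ^ p - C (α ^ (p - 1)) * X) = 0
      simp only [eval_sub, eval_mul, eval_pow, eval_X, eval_C]
      rw [← pow_succ, show p - 1 + 1 = p by omega, sub_self]
    have hf1α : (evalRingHom α) f₁ = 0 := by
      rw [hf1, fgen_map (evalRingHom α) p (e - 1) cP u (C β'), huevα]
      exact fgen_zero_left _ _ _ _ hp0
    have hfαα : (evalRingHom α) (fgen p e aP X (C α)) = fgen p e aK α α := by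
      rw [fgen_map (evalRingHom α) p e aP X (C α)]
      simp [fgen, Rgen, aP, aK]
    have hfα'α : (evalRingHom α) fα' = fgen p e aK α α' := by
      rw [hfa', fgen_map (evalRingHom α) p e aP X (C α')]
      simp [fgen, Rgen, aP, aK]
    have hLα : (evalRingHom α) L = b0 * α - fgen p e aK α α := by
      rw [hL, map_sub, map_mul, hfαα]
      simp
    have : P.eval α = (evalRingHom α) P := rfl
    rw [this, hP2]
    simp only [map_sub, map_add, map_neg, map_mul]
    rw [hLα, hf1α, hfα'α]
    simp only [coe_evalRingHom, eval_C, eval_X]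
    rw [hlam, hg, hb0, show fgen p e aK α α' = fgen p e aK α' α from hω]
    field_simp
    ring
  -- conclusion
  rw [hblast] at hPα
  simp only [eval_mul, eval_C, eval_pow, eval_X] at hPα
  have hbe : b (e - 1) = 0 := by
    rcases mul_eq_zero.mp hPα with h | h
    · exact h
    · exact absurd h (pow_ne_zero _ hα0)
  rw [hblast, hbe, map_zero, zero_mul]
end

section
/- Assume p is odd. If y ∈ F_q satisfies E_R(y) = 0, then Tr_{F_q/F_p}(y·R(y)) = 0. -/
open Finset Polynomial

section
variable {Fp F : Type*} [Field Fp] [Fintype Fp] [Field F] [Fintype F] [Algebra Fp F]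

lemma trace_pow_aux (p₀ n p : ℕ) (hp₀ : p₀.Prime) [CharP F p₀]
    (hpn : p = p₀ ^ n) (hcardp : Fintype.card Fp = p) (z : F) :
    Algebra.trace Fp F (z ^ p) = Algebra.trace Fp F z := by
  haveI := hp₀.one_lt
  haveI : ExpChar F p₀ := ExpChar.prime hp₀
  let φ : F →ₐ[Fp] F :=
    { toRingHom := iterateFrobenius F p₀ n
      commutes' := fun r => by
        show iterateFrobenius F p₀ n (algebraMap Fp F r) = algebraMap Fp F r
        rw [iterateFrobenius_def, ← map_pow, ← hpn, ← hcardp, FiniteField.pow_card] }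
  have hbij : Function.Bijective φ :=
    Finite.injective_iff_bijective.mp φ.toRingHom.injective
  have := Algebra.trace_eq_of_algEquiv (AlgEquiv.ofBijective φ hbij) z
  simpa [φ, AlgEquiv.ofBijective, iterateFrobenius_def, ← hpn] using this

lemma trace_pow_pow_aux (p₀ n p : ℕ) (hp₀ : p₀.Prime) [CharP F p₀]
    (hpn : p = p₀ ^ n) (hcardp : Fintype.card Fp = p) (k : ℕ) (z : F) :
    Algebra.trace Fp F (z ^ p ^ k) = Algebra.trace Fp F z := by
  induction k with
  | zero => simp
  | succ k ih =>
    rw [pow_succ, pow_mul, trace_pow_aux p₀ n p hp₀ hpn hcardp, ih]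

end

/-- for `p` odd, if `y ∈ F_q` satisfies `E_R(y) = 0` then
`Tr_{F_q/F_p}(y·R(y)) = 0`. -/
theorem statement13 {Fp F : Type*} [Field Fp] [Fintype Fp] [Field F] [Fintype F] [Algebra Fp F]
    (p₀ n p s q e : ℕ) (hp₀ : p₀.Prime) (hodd : Odd p₀) [CharP F p₀]
    (hn : 0 < n) (hpn : p = p₀ ^ n) (hs : 0 < s) (hq : q = p ^ s)
    (hcardp : Fintype.card Fp = p) (hcard : Fintype.card F = q)
    (a : ℕ → F) (hae : a e ≠ 0)
    (y : F) (hy : Egen p e a y = 0) :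
    Algebra.trace Fp F (y * Rgen p e a y) = 0 := by
  have htr : ∀ (k : ℕ) (z : F), Algebra.trace Fp F (z ^ p ^ k) = Algebra.trace Fp F z :=
    fun k z => trace_pow_pow_aux p₀ n p hp₀ hpn hcardp k z
  have expand : y ^ p ^ e * Egen p e a y
      = (y * Rgen p e a y) ^ p ^ e
        + ∑ i ∈ Finset.range (e + 1), (a i * y ^ p ^ i * y) ^ p ^ (e - i) := by
    unfold Egen
    rw [mul_add, ← mul_pow, Finset.mul_sum]
    congr 1
    refine Finset.sum_congr rfl fun i hi => ?_
    have hie : i ≤ e := Nat.lt_succ_iff.mp (Finset.mem_range.mp hi)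
    have : y ^ p ^ e = (y ^ p ^ i) ^ p ^ (e - i) := by
      rw [← pow_mul, ← pow_add, Nat.add_sub_cancel' hie]
    rw [this, ← mul_pow]
    ring
  have h0 : Algebra.trace Fp F (y * Rgen p e a y)
      + Algebra.trace Fp F (y * Rgen p e a y) = 0 := by
    have := congrArg (Algebra.trace Fp F) expand
    rw [hy, mul_zero, map_zero, map_add, htr e, map_sum] at this
    have hsum : ∑ i ∈ Finset.range (e + 1),
        Algebra.trace Fp F ((a i * y ^ p ^ i * y) ^ p ^ (e - i))
        = Algebra.trace Fp F (y * Rgen p e a y) := by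
      rw [show y * Rgen p e a y = ∑ i ∈ Finset.range (e + 1), a i * y ^ p ^ i * y by
        rw [Rgen, Finset.mul_sum]; exact Finset.sum_congr rfl fun i _ => by ring, map_sum]
      exact Finset.sum_congr rfl fun i _ => htr (e - i) _
    rw [hsum] at this
    exact this.symm
  haveI : CharP Fp p₀ := (Algebra.charP_iff Fp F p₀).mpr inferInstance
  have h2 : (2 : Fp) ≠ 0 := by
    rw [Ne, show ((2 : Fp) = ((2 : ℕ) : Fp)) by norm_num, CharP.cast_eq_zero_iff Fp p₀]
    intro hdvd
    rcases (Nat.prime_dvd_prime_iff_eq hp₀ Nat.prime_two).mp hdvd with rfl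
    exact (Nat.not_odd_iff_even.mpr even_two) hodd
  have h2m : (2 : Fp) * Algebra.trace Fp F (y * Rgen p e a y) = 0 := by
    rw [two_mul]; exact h0
  rcases mul_eq_zero.mp h2m with h | h
  · exact absurd h h2
  · exact h
end

section
/- Assume p is odd, write q = p^s, and let A ⊆ V_R ∩ F_q be a maximal totally isotropic F_p-subspace with respect to ω_R, with F_R(x) := Π_{α∈A}(x−α). Let a(x) ∈ F_q[x] be an additive polynomial with x^q − x = a(F_R(x)). For t ∈ F_q and x ∈ F̄ with F_R(x) = t, set b(x,t) := Σ_{i=0}^{s−1} (x R(x))^{p^i} − f_R(x, x^q − x). Then: (i) b(x,t) does not depend on the choice of x with F_R(x) = t (write b(t) for this common value); (ii) E_R(a(t)) = 0 and b(t)^p − b(t) = a(t)·R(a(t)), so that (a(t), b(t)) ∈ H_R with first coordinate in A. -/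
open Finset Polynomial

section Helpers

variable {K : Type*} [Field K] {p₀ n p : ℕ} [CharP K p₀]

private lemma hp_add (hp₀ : p₀.Prime) (hpn : p = p₀ ^ n) (m : ℕ) (u v : K) :
    (u + v) ^ p ^ m = u ^ p ^ m + v ^ p ^ m := by
  haveI := Fact.mk hp₀
  rw [hpn, ← pow_mul]
  exact add_pow_char_pow u v p₀ (n * m)

private lemma hp_sub (hp₀ : p₀.Prime) (hpn : p = p₀ ^ n) (m : ℕ) (u v : K) :
    (u - v) ^ p ^ m = u ^ p ^ m - v ^ p ^ m := by
  haveI := Fact.mk hp₀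
  rw [hpn, ← pow_mul]
  exact sub_pow_char_pow (p := p₀) (n := n * m) u v

private lemma hp_sum (hp₀ : p₀.Prime) (hpn : p = p₀ ^ n) (m : ℕ) {ι : Type*}
    (s : Finset ι) (f : ι → K) :
    (∑ i ∈ s, f i) ^ p ^ m = ∑ i ∈ s, f i ^ p ^ m := by
  haveI := Fact.mk hp₀
  rw [hpn, ← pow_mul]
  exact sum_pow_char_pow (p := p₀) (n := n * m) s f

private lemma hp_add1 (hp₀ : p₀.Prime) (hpn : p = p₀ ^ n) (u v : K) :
    (u + v) ^ p = u ^ p + v ^ p := by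
  have := hp_add hp₀ hpn 1 u v; simpa [pow_one] using this

private lemma hp_sub1 (hp₀ : p₀.Prime) (hpn : p = p₀ ^ n) (u v : K) :
    (u - v) ^ p = u ^ p - v ^ p := by
  have := hp_sub hp₀ hpn 1 u v; simpa [pow_one] using this

private lemma hp_sum1 (hp₀ : p₀.Prime) (hpn : p = p₀ ^ n) {ι : Type*} (s : Finset ι)
    (f : ι → K) : (∑ i ∈ s, f i) ^ p = ∑ i ∈ s, f i ^ p := by
  have := hp_sum hp₀ hpn 1 s f; simpa [pow_one] using this

private lemma Rgen_add_s14 (hp₀ : p₀.Prime) (hpn : p = p₀ ^ n) (e : ℕ) (c : ℕ → K) (u v : K) :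
    Rgen p e c (u + v) = Rgen p e c u + Rgen p e c v := by
  unfold Rgen
  rw [← Finset.sum_add_distrib]
  refine Finset.sum_congr rfl fun i _ => ?_
  rw [hp_add hp₀ hpn, mul_add]

private lemma fgen_add_left_s14 (hp₀ : p₀.Prime) (hpn : p = p₀ ^ n) (e : ℕ) (c : ℕ → K) (u v y : K) :
    fgen p e c (u + v) y = fgen p e c u y + fgen p e c v y := by
  unfold fgen
  rw [← neg_add, ← Finset.sum_add_distrib]
  congr 1
  refine Finset.sum_congr rfl fun i _ => ?_
  have h1 : ∀ j ∈ Finset.range (e - i),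
      (c i * (u + v) ^ p ^ i * y) ^ p ^ j
        = (c i * u ^ p ^ i * y) ^ p ^ j + (c i * v ^ p ^ i * y) ^ p ^ j := by
    intro j _
    have hb : c i * (u + v) ^ p ^ i * y = c i * u ^ p ^ i * y + c i * v ^ p ^ i * y := by
      rw [hp_add hp₀ hpn]; ring
    rw [hb, hp_add hp₀ hpn]
  have h2 : ((u + v) * Rgen p e c y) ^ p ^ i
      = (u * Rgen p e c y) ^ p ^ i + (v * Rgen p e c y) ^ p ^ i := by
    rw [add_mul, hp_add hp₀ hpn]
  rw [Finset.sum_congr rfl h1, Finset.sum_add_distrib, h2]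
  ring

private lemma key_identity (hp₀ : p₀.Prime) (hodd : Odd p₀) (hpn : p = p₀ ^ n) (e : ℕ)
    (c : ℕ → K) (x y : K) :
    fgen p e c x y ^ p - fgen p e c x y =
      x * Rgen p e c y + y * Rgen p e c x - x ^ p ^ e * Egen p e c y := by
  have hoddp : Odd p := by rw [hpn]; exact hodd.pow
  set Ry := Rgen p e c y with hRy
  set v : ℕ → K := fun i => c i * x ^ p ^ i * y with hv
  set S : K := ∑ i ∈ Finset.range e,
    ((∑ j ∈ Finset.range (e - i), v i ^ p ^ j) + (x * Ry) ^ p ^ i) with hSdef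
  have hf : fgen p e c x y = -S := rfl
  have hSp : S ^ p = ∑ i ∈ Finset.range e,
      ((∑ j ∈ Finset.range (e - i), v i ^ p ^ (j + 1)) + (x * Ry) ^ p ^ (i + 1)) := by
    rw [hSdef, hp_sum1 hp₀ hpn]
    refine Finset.sum_congr rfl fun i _ => ?_
    rw [hp_add1 hp₀ hpn, hp_sum1 hp₀ hpn]
    congr 1
    · refine Finset.sum_congr rfl fun j _ => ?_
      rw [← pow_mul, ← pow_succ]
    · rw [← pow_mul, ← pow_succ]
  have main : S - S ^ p = ((∑ i ∈ Finset.range e, v i)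
      - (∑ i ∈ Finset.range e, v i ^ p ^ (e - i))) + ((x * Ry) - (x * Ry) ^ p ^ e) := by
    rw [hSp]
    conv_lhs => rw [hSdef]
    rw [← Finset.sum_sub_distrib]
    have hterm : ∀ i ∈ Finset.range e,
        ((∑ j ∈ Finset.range (e - i), v i ^ p ^ j) + (x * Ry) ^ p ^ i)
          - ((∑ j ∈ Finset.range (e - i), v i ^ p ^ (j + 1)) + (x * Ry) ^ p ^ (i + 1))
        = (v i - v i ^ p ^ (e - i)) + ((x * Ry) ^ p ^ i - (x * Ry) ^ p ^ (i + 1)) := by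
      intro i _
      have htel : (∑ j ∈ Finset.range (e - i), (v i ^ p ^ j - v i ^ p ^ (j + 1)))
          = v i ^ p ^ 0 - v i ^ p ^ (e - i) :=
        Finset.sum_range_sub' (fun j => v i ^ p ^ j) (e - i)
      rw [Finset.sum_sub_distrib, pow_zero, pow_one] at htel
      linear_combination htel
    rw [Finset.sum_congr rfl hterm, Finset.sum_add_distrib, Finset.sum_sub_distrib,
      Finset.sum_range_sub' (fun i => (x * Ry) ^ p ^ i) e, pow_zero, pow_one]
  have h1 : ∑ i ∈ Finset.range e, v i = y * Rgen p e c x - c e * x ^ p ^ e * y := by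
    have hR : Rgen p e c x = (∑ i ∈ Finset.range e, c i * x ^ p ^ i) + c e * x ^ p ^ e := by
      rw [Rgen, Finset.sum_range_succ]
    have hterm : ∀ i ∈ Finset.range e, v i = y * (c i * x ^ p ^ i) := by
      intro i _; rw [hv]; ring
    rw [Finset.sum_congr rfl hterm, ← Finset.mul_sum, hR]
    ring
  have h2 : ∑ i ∈ Finset.range e, v i ^ p ^ (e - i)
      = x ^ p ^ e * ((∑ i ∈ Finset.range (e + 1), (c i * y) ^ p ^ (e - i)) - c e * y) := by
    have hstep : ∀ i ∈ Finset.range e, v i ^ p ^ (e - i) = (c i * y) ^ p ^ (e - i) * x ^ p ^ e := by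
      intro i hi
      have hie : i ≤ e := le_of_lt (Finset.mem_range.mp hi)
      have hb : v i = (c i * y) * x ^ p ^ i := by rw [hv]; ring
      rw [hb, mul_pow, ← pow_mul, ← pow_add, Nat.add_sub_cancel' hie]
    have hsplit : ∑ i ∈ Finset.range (e + 1), (c i * y) ^ p ^ (e - i)
        = (∑ i ∈ Finset.range e, (c i * y) ^ p ^ (e - i)) + c e * y := by
      rw [Finset.sum_range_succ, Nat.sub_self, pow_zero, pow_one]
    rw [Finset.sum_congr rfl hstep, ← Finset.sum_mul]
    linear_combination (-(x ^ p ^ e)) * hsplit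
  have hE : Egen p e c y = Ry ^ p ^ e + ∑ i ∈ Finset.range (e + 1), (c i * y) ^ p ^ (e - i) := rfl
  have hgoal : fgen p e c x y ^ p - fgen p e c x y = S - S ^ p := by
    rw [hf, hoddp.neg_pow]; ring
  rw [hgoal, main, h1, h2, hE, mul_pow]
  ring

private lemma qcomm_R (hp₀ : p₀.Prime) {q m : ℕ} (hq' : q = p₀ ^ m) (e : ℕ)
    (c : ℕ → K) (hc : ∀ i, c i ^ q = c i) (x : K) :
    Rgen p e c x ^ q = Rgen p e c (x ^ q) := by
  haveI := Fact.mk hp₀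
  subst hq'
  have h : ∀ z : K, z ^ p₀ ^ m = iterateFrobenius K p₀ m z := fun _ => rfl
  rw [h]
  simp only [Rgen, map_sum, map_mul, map_pow]
  simp only [iterateFrobenius_def, hc]

private lemma qcomm_f (hp₀ : p₀.Prime) {q m : ℕ} (hq' : q = p₀ ^ m) (e : ℕ)
    (c : ℕ → K) (hc : ∀ i, c i ^ q = c i) (x y : K) :
    fgen p e c x y ^ q = fgen p e c (x ^ q) (y ^ q) := by
  haveI := Fact.mk hp₀
  subst hq'
  have h : ∀ z : K, z ^ p₀ ^ m = iterateFrobenius K p₀ m z := fun _ => rfl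
  rw [h]
  simp only [fgen, Rgen, map_neg, map_sum, map_add, map_mul, map_pow]
  simp only [iterateFrobenius_def, hc]

end Helpers

/-- with `x^q − x = a(F_R(x))` for an additive `a(x) ∈ F_q[x]`, the value
`b(x,t) := Σ_{i=0}^{s−1}(xR(x))^{p^i} − f_R(x, x^q − x)` depends only on `t = F_R(x)`,
and `(a(t), b(t)) ∈ H_R` with `a(t) ∈ A`. -/
theorem statement14 {F K : Type*} [Field F] [Fintype F] [Field K] [IsAlgClosed K]
    [DecidableEq K] [Algebra F K]
    (p₀ n p s q e : ℕ) (hp₀ : p₀.Prime) (hodd : Odd p₀) [CharP F p₀]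
    (hn : 0 < n) (hpn : p = p₀ ^ n) (hs : 0 < s) (hq : q = p ^ s)
    (hcard : Fintype.card F = q) (a : ℕ → F) (hae : a e ≠ 0)
    -- `A ⊆ V_R ∩ F_q` a totally isotropic `F_p`-subspace with `#A = p^e` (i.e. maximal)
    (A : Finset K) (h0A : (0 : K) ∈ A)
    (hadd : ∀ x ∈ A, ∀ y ∈ A, x + y ∈ A)
    (hsmul : ∀ c : K, c ^ p = c → ∀ x ∈ A, c * x ∈ A)
    (hAV : ∀ x ∈ A, Egen p e (fun i => algebraMap F K (a i)) x = 0)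
    (hAF : ∀ x ∈ A, ∃ y : F, algebraMap F K y = x)
    (hiso : ∀ x ∈ A, ∀ y ∈ A, fgen p e (fun i => algebraMap F K (a i)) x y =
      fgen p e (fun i => algebraMap F K (a i)) y x)
    (hcardA : A.card = p ^ e)
    -- the additive polynomial `a(x) ∈ F_q[x]` with `x^q − x = a(F_R(x))`
    (aQ : Polynomial F)
    (haQadd : ∀ u v : K, (aQ.map (algebraMap F K)).eval (u + v) =
      (aQ.map (algebraMap F K)).eval u + (aQ.map (algebraMap F K)).eval v)
    (haQ : ∀ x : K, x ^ q - x =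
      (aQ.map (algebraMap F K)).eval ((∏ α ∈ A, (Polynomial.X - Polynomial.C α)).eval x)) :
    let aK : ℕ → K := fun i => algebraMap F K (a i)
    let FR : Polynomial K := ∏ α ∈ A, (Polynomial.X - Polynomial.C α)
    let bval : K → K := fun x =>
      (∑ i ∈ Finset.range s, (x * Rgen p e aK x) ^ p ^ i) - fgen p e aK x (x ^ q - x)
    let aval : F → K := fun t => (aQ.map (algebraMap F K)).eval (algebraMap F K t)
    -- (i) `b(x,t)` is independent of the choice of `x` with `F_R(x) = t`
    (∀ t : F, ∀ x y : K, FR.eval x = algebraMap F K t → FR.eval y = algebraMap F K t →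
      bval x = bval y) ∧
    -- (ii) `(a(t), b(t)) ∈ H_R` with first coordinate in `A`
    (∀ t : F, aval t ∈ A ∧ Egen p e aK (aval t) = 0 ∧
      ∀ x : K, FR.eval x = algebraMap F K t →
        bval x ^ p - bval x = aval t * Rgen p e aK (aval t)) := by
  intro aK FR bval aval
  haveI : Fact p₀.Prime := ⟨hp₀⟩
  haveI hKchar : CharP K p₀ := charP_of_injective_algebraMap (algebraMap F K).injective p₀
  have hFRdef : FR = ∏ α ∈ A, (X - C α) := rfl
  have hbval : ∀ x : K, bval x = (∑ i ∈ Finset.range s, (x * Rgen p e aK x) ^ p ^ i)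
      - fgen p e aK x (x ^ q - x) := fun _ => rfl
  have haval : ∀ t : F, aval t = (aQ.map (algebraMap F K)).eval (algebraMap F K t) := fun _ => rfl
  have hAV' : ∀ x ∈ A, Egen p e aK x = 0 := hAV
  have hiso' : ∀ x ∈ A, ∀ y ∈ A, fgen p e aK x y = fgen p e aK y x := hiso
  have haQ' : ∀ x : K, x ^ q - x = (aQ.map (algebraMap F K)).eval (FR.eval x) := haQ
  have hq' : q = p₀ ^ (n * s) := by rw [hq, hpn, ← pow_mul]
  have hoddp : Odd p := by rw [hpn]; exact hodd.pow
  have hqsub : ∀ u v : K, (u - v) ^ q = u ^ q - v ^ q := by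
    intro u v
    have := hp_sub (p := q) (n := n * s) hp₀ hq' 1 u v
    simpa [pow_one] using this
  have hFq : ∀ t : F, (algebraMap F K t) ^ q = algebraMap F K t := by
    intro t; rw [← map_pow, ← hcard, FiniteField.pow_card]
  have hAq : ∀ α ∈ A, α ^ q = α := by
    intro α hα; obtain ⟨t, ht⟩ := hAF α hα; rw [← ht, hFq]
  have hcq : ∀ i, aK i ^ q = aK i := fun i => hFq (a i)
  have hAneg : ∀ α ∈ A, -α ∈ A := by
    intro α hα
    have h1 : ((-1 : K)) ^ p = -1 := hoddp.neg_one_pow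
    have := hsmul (-1) h1 α hα
    simpa using this
  have hAsub : ∀ x ∈ A, ∀ y ∈ A, x - y ∈ A := by
    intro x hx y hy
    rw [sub_eq_add_neg]
    exact hadd x hx _ (hAneg y hy)
  -- basic facts about FR
  have hN : 0 < A.card := Finset.card_pos.mpr ⟨0, h0A⟩
  have hmonic : FR.Monic := by
    rw [hFRdef]; exact monic_prod_of_monic _ _ fun β _ => monic_X_sub_C β
  have hdegFR : FR.natDegree = A.card := by
    rw [hFRdef, natDegree_prod _ _ fun β _ => X_sub_C_ne_zero β]
    simp [natDegree_X_sub_C]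
  have hFR0 : ∀ α ∈ A, FR.eval α = 0 := by
    intro α hα
    rw [hFRdef, eval_prod]
    refine Finset.prod_eq_zero hα ?_
    simp
  have hFRshift : ∀ (x : K), ∀ α ∈ A, FR.eval (x + α) = FR.eval x := by
    intro x α hα
    rw [hFRdef, eval_prod, eval_prod]
    simp only [eval_sub, eval_X, eval_C]
    refine Finset.prod_bij' (fun β _ => β - α) (fun β _ => β + α) ?_ ?_ ?_ ?_ ?_
    · intro β hβ; exact hAsub β hβ α hα
    · intro β hβ; exact hadd β hβ α hα
    · intro β hβ; ring
    · intro β hβ; ring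
    · intro β hβ; ring
  have hFRadd : ∀ x y : K, FR.eval (x + y) = FR.eval x + FR.eval y := by
    intro x y
    set g : Polynomial K := FR.comp (X + C x) - FR - C (FR.eval x) with hgdef
    have hco : (FR.comp (X + C x)).Monic := hmonic.comp_X_add_C x
    have hcodeg : (FR.comp (X + C x)).natDegree = FR.natDegree := by
      rw [natDegree_comp]; simp
    have hgval : ∀ β ∈ A, g.eval β = 0 := by
      intro β hβ
      rw [hgdef]
      simp only [eval_sub, eval_comp, eval_add, eval_X, eval_C]
      rw [add_comm β x, hFRshift x β hβ, hFR0 β hβ]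
      ring
    have hdlt : g.natDegree < A.card := by
      by_cases hg0 : g = 0
      · simpa [hg0] using hN
      · rw [natDegree_lt_iff_degree_lt hg0]
        have hd1 : (FR.comp (X + C x)).degree = FR.degree := by
          rw [degree_eq_natDegree hco.ne_zero, degree_eq_natDegree hmonic.ne_zero, hcodeg]
        have hd2 : (FR.comp (X + C x) - FR).degree < FR.degree := by
          have := degree_sub_lt hd1 hco.ne_zero (by rw [hco.leadingCoeff, hmonic.leadingCoeff])
          rwa [hd1] at this
        have hd3 : (C (FR.eval x) : Polynomial K).degree < FR.degree := by
          refine lt_of_le_of_lt degree_C_le ?_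
          rw [degree_eq_natDegree hmonic.ne_zero, hdegFR]
          exact_mod_cast hN
        calc g.degree ≤ max (FR.comp (X + C x) - FR).degree (C (FR.eval x) : Polynomial K).degree :=
              degree_sub_le _ _
          _ < FR.degree := max_lt hd2 hd3
          _ = (A.card : WithBot ℕ) := by rw [degree_eq_natDegree hmonic.ne_zero, hdegFR]
    have hg0 : g = 0 := Polynomial.eq_zero_of_natDegree_lt_card_of_eval_eq_zero' g A hgval hdlt
    have hev := congrArg (Polynomial.eval y) hg0
    simp only [hgdef, eval_sub, eval_comp, eval_add, eval_X, eval_C, eval_zero] at hev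
    rw [add_comm x y]
    linear_combination hev
  have hFRzero : FR.eval 0 = 0 := hFR0 0 h0A
  have hFRq : ∀ x : K, FR.eval (x ^ q) = (FR.eval x) ^ q := by
    intro x
    rw [hFRdef, eval_prod, eval_prod]
    simp only [eval_sub, eval_X, eval_C]
    rw [← Finset.prod_pow]
    refine Finset.prod_congr rfl fun β hβ => ?_
    rw [hqsub, hAq β hβ]
  have hroot : ∀ z : K, FR.eval z = 0 → z ∈ A := by
    intro z hz
    rw [hFRdef, eval_prod] at hz
    obtain ⟨β, hβ, h0⟩ := Finset.prod_eq_zero_iff.mp hz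
    simp only [eval_sub, eval_X, eval_C, sub_eq_zero] at h0
    rwa [h0]
  have hTmem : ∀ t : F, ∀ x : K, FR.eval x = algebraMap F K t → x ^ q - x ∈ A := by
    intro t x hx
    apply hroot
    have hneg : FR.eval (-x) = -FR.eval x := by
      have h3 := hFRadd x (-x)
      have e1 : x + -x = 0 := by ring
      rw [e1, hFRzero] at h3
      linear_combination -h3
    have h4 : FR.eval (x ^ q - x) = FR.eval (x ^ q) + FR.eval (-x) := by
      rw [sub_eq_add_neg, hFRadd]
    rw [h4, hneg, hFRq, hx, hFq t]
    ring
  have hTval : ∀ t : F, ∀ x : K, FR.eval x = algebraMap F K t → x ^ q - x = aval t := by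
    intro t x hx
    rw [haQ' x, hx, haval]
  have hex : ∀ t : F, ∃ x : K, FR.eval x = algebraMap F K t := by
    intro t
    have hdegpos : (0 : WithBot ℕ) < FR.degree := by
      rw [degree_eq_natDegree hmonic.ne_zero, hdegFR]
      exact_mod_cast hN
    have hdc : (FR - C (algebraMap F K t)).degree = FR.degree := degree_sub_C hdegpos
    have hne : (FR - C (algebraMap F K t)).degree ≠ 0 := by
      rw [hdc]; exact hdegpos.ne'
    obtain ⟨x, hx⟩ := IsAlgClosed.exists_root _ hne
    refine ⟨x, ?_⟩
    have := hx
    simp only [IsRoot, eval_sub, eval_C, sub_eq_zero] at this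
    exact this
  -- instantiated helper lemmas
  have key := fun (x y : K) => key_identity (n := n) hp₀ hodd hpn e aK x y
  have Radd := fun (u v : K) => Rgen_add_s14 (n := n) hp₀ hpn e aK u v
  have fadd := fun (u v y : K) => fgen_add_left_s14 (n := n) hp₀ hpn e aK u v y
  have Rq := fun (x : K) => qcomm_R (p := p) hp₀ hq' e aK hcq x
  have fq := fun (x y : K) => qcomm_f (p := p) hp₀ hq' e aK hcq x y
  -- telescoping sums
  have tele : ∀ w : K, ∑ i ∈ Finset.range s, (w ^ p - w) ^ p ^ i = w ^ q - w := by
    intro w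
    have hterm : ∀ i ∈ Finset.range s, (w ^ p - w) ^ p ^ i = w ^ p ^ (i + 1) - w ^ p ^ i := by
      intro i _
      rw [hp_sub hp₀ hpn, ← pow_mul, ← pow_succ']
    rw [Finset.sum_congr rfl hterm, Finset.sum_range_sub (fun i => w ^ p ^ i) s,
      pow_zero, pow_one, hq]
  have tele2 : ∀ u : K, (∑ i ∈ Finset.range s, u ^ p ^ i) ^ p
      - (∑ i ∈ Finset.range s, u ^ p ^ i) = u ^ q - u := by
    intro u
    rw [hp_sum1 hp₀ hpn, ← Finset.sum_sub_distrib]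
    have hterm : ∀ i ∈ Finset.range s, (u ^ p ^ i) ^ p - u ^ p ^ i
        = u ^ p ^ (i + 1) - u ^ p ^ i := by
      intro i _
      rw [← pow_mul, ← pow_succ]
    rw [Finset.sum_congr rfl hterm, Finset.sum_range_sub (fun i => u ^ p ^ i) s,
      pow_zero, pow_one, hq]
  -- characteristic is odd
  have h2K : (2 : K) ≠ 0 := by
    have h2 : ((2 : ℕ) : K) ≠ 0 := by
      rw [Ne, CharP.cast_eq_zero_iff K p₀ 2]
      intro hdvd
      have h22 := (Nat.prime_dvd_prime_iff_eq hp₀ Nat.prime_two).mp hdvd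
      rw [h22] at hodd
      exact (by decide : ¬ Odd 2) hodd
    simpa using h2
  have h2pow : ∀ m : ℕ, (2 : K) ^ p ^ m = 2 := by
    intro m
    rw [show (2 : K) = 1 + 1 by norm_num, hp_add hp₀ hpn, one_pow]
  -- vanishing of the trace of α·R(α) for α ∈ A
  have Q0 : ∀ α ∈ A, ∑ i ∈ Finset.range s, (α * Rgen p e aK α) ^ p ^ i = 0 := by
    intro α hα
    have hw : fgen p e aK α α ^ p - fgen p e aK α α = 2 * (α * Rgen p e aK α) := by
      rw [key α α, hAV' α hα]; ring
    have hwq : fgen p e aK α α ^ q = fgen p e aK α α := by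
      rw [fq α α, hAq α hα]
    have t1 := tele (fgen p e aK α α)
    rw [hw, hwq, sub_self] at t1
    have hterm : ∀ i ∈ Finset.range s, (2 * (α * Rgen p e aK α)) ^ p ^ i
        = 2 * (α * Rgen p e aK α) ^ p ^ i := by
      intro i _
      rw [mul_pow, h2pow]
    rw [Finset.sum_congr rfl hterm, ← Finset.mul_sum] at t1
    rcases mul_eq_zero.mp t1 with h | h
    · exact absurd h h2K
    · exact h
  -- the Artin--Schreier equation for bval
  have hbeq : ∀ x : K, x ^ q - x ∈ A →
      bval x ^ p - bval x = (x ^ q - x) * Rgen p e aK (x ^ q - x) := by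
    intro x hTA
    rw [hbval x]
    set T : K := x ^ q - x with hTdef
    have hET : Egen p e aK T = 0 := hAV' T hTA
    have hkey := key x T
    rw [hET, mul_zero, sub_zero] at hkey
    have htel := tele2 (x * Rgen p e aK x)
    have hxq : x ^ q = x + T := by rw [hTdef]; ring
    have hqq : (x * Rgen p e aK x) ^ q = (x + T) * (Rgen p e aK x + Rgen p e aK T) := by
      rw [mul_pow, Rq x, hxq, Radd]
    rw [hqq] at htel
    rw [hp_sub1 hp₀ hpn]
    linear_combination htel - hkey
  constructor
  · -- part (i)
    intro t x y hx hy
    have hTx := hTval t x hx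
    have hTy := hTval t y hy
    have hmemT : aval t ∈ A := by rw [← hTx]; exact hTmem t x hx
    set T : K := aval t with hTdef
    have hα : x - y ∈ A := by
      apply hroot
      have h3 := hFRadd (x - y) y
      have e1 : x - y + y = x := by ring
      rw [e1, hx, hy] at h3
      linear_combination -h3
    set α : K := x - y with hαdef
    have hxy : x = y + α := by rw [hαdef]; ring
    rw [hbval x, hbval y, hTx, hTy]
    have hEα : Egen p e aK α = 0 := hAV' α hα
    have hkeyyα := key y α
    rw [hEα, mul_zero, sub_zero] at hkeyyα
    have hsum : ∀ i ∈ Finset.range s, (x * Rgen p e aK x) ^ p ^ i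
        = (y * Rgen p e aK y) ^ p ^ i
          + ((y * Rgen p e aK α + α * Rgen p e aK y) ^ p ^ i + (α * Rgen p e aK α) ^ p ^ i) := by
      intro i _
      have hb : x * Rgen p e aK x = y * Rgen p e aK y
          + ((y * Rgen p e aK α + α * Rgen p e aK y) + α * Rgen p e aK α) := by
        rw [hxy, Radd]; ring
      rw [hb, hp_add hp₀ hpn, hp_add hp₀ hpn]
    have hcross : ∑ i ∈ Finset.range s, (y * Rgen p e aK α + α * Rgen p e aK y) ^ p ^ i
        = fgen p e aK T α := by
      have t1 := tele (fgen p e aK y α)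
      rw [hkeyyα] at t1
      rw [t1, fq y α, hAq α hα]
      have hyq : y ^ q = y + T := by linear_combination hTy
      rw [hyq, fadd y T α]
      ring
    rw [Finset.sum_congr rfl hsum, Finset.sum_add_distrib, Finset.sum_add_distrib, hcross,
      Q0 α hα, hxy, fadd y α T]
    have hisoTα := hiso' T hmemT α hα
    linear_combination hisoTα
  · -- part (ii)
    intro t
    obtain ⟨x₀, hx₀⟩ := hex t
    have hmem : aval t ∈ A := by
      rw [← hTval t x₀ hx₀]
      exact hTmem t x₀ hx₀
    refine ⟨hmem, hAV' _ hmem, ?_⟩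
    intro x hx
    have hT := hTval t x hx
    rw [← hT]
    exact hbeq x (by rw [hT]; exact hmem)
end

section
/- Assume p is odd, write q = p^s, and let A ⊆ V_R ∩ F_q be a maximal totally isotropic F_p-subspace, F_R(x) := Π_{α∈A}(x−α), c_A := (−1)^e·(a_e/2)·Π_{α∈A∖{0}} α^{−1} (for e ≥ 1; c_A := a_0 if e = 0). Let a(x) ∈ F_q[x] be an additive polynomial with x^q − x = a(F_R(x)), and for t ∈ F_q let b(t) := Σ_{i=0}^{s−1}(x R(x))^{p^i} − f_R(x, x^q − x) for any x with F_R(x) = t. Let Δ(x) ∈ F_q[x] satisfy x·R(x) = c_A·F_R(x)² + Δ(x)^p − Δ(x) and Δ(x+a) − Δ(x) = f_R(x,a) + f_R(a,a)/2 for all a ∈ A. Then for every t ∈ F_q, b(t) − f_R(a(t),a(t))/2 = Tr_{F_q/F_p}(c_A·t²). -/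
open Finset Polynomial

lemma Rgen_hom {A B : Type*} [CommRing A] [CommRing B] (φ : A →+* B) (p e : ℕ) (a : ℕ → A)
    (x : A) : φ (Rgen p e a x) = Rgen p e (fun i => φ (a i)) (φ x) := by
  simp [Rgen, map_sum, map_mul, map_pow]

lemma fgen_hom {A B : Type*} [CommRing A] [CommRing B] (φ : A →+* B) (p e : ℕ) (a : ℕ → A)
    (x y : A) : φ (fgen p e a x y) = fgen p e (fun i => φ (a i)) (φ x) (φ y) := by
  simp [fgen, map_sum, map_mul, map_pow, map_neg, map_add, Rgen_hom]

lemma trace_formula {Fp F : Type*} [Field Fp] [Fintype Fp] [Field F] [Fintype F] [Algebra Fp F]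
    (p₀ n p s : ℕ) (hp₀ : p₀.Prime) (hn : 0 < n) (hpn : p = p₀ ^ n) [CharP F p₀]
    (hs : 0 < s) (hcardp : Fintype.card Fp = p) (hcard : Fintype.card F = p ^ s) (z : F) :
    algebraMap Fp F (Algebra.trace Fp F z) = ∑ i ∈ Finset.range s, z ^ p ^ i := by
  classical
  haveI := Fact.mk hp₀
  haveI : ExpChar F p₀ := ExpChar.prime hp₀
  have hp2 : 2 ≤ p := by
    subst hpn
    calc 2 ≤ p₀ := hp₀.two_le
    _ ≤ p₀ ^ n := Nat.le_self_pow hn.ne' _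
  have hp1 : 1 < p := hp2
  have hfr : Module.finrank Fp F = s := by
    have h2 := Module.card_eq_pow_finrank (K := Fp) (V := F)
    rw [hcardp, hcard] at h2
    exact (Nat.pow_right_injective hp2 h2.symm)
  have hpow : ∀ i : ℕ, p ^ i = p₀ ^ (n * i) := fun i => by rw [hpn, ← pow_mul]
  have hfix : ∀ (c : Fp) (i : ℕ), c ^ p ^ i = c := fun c i => by
    have := FiniteField.pow_card_pow i c
    rwa [hcardp] at this
  -- the Frobenius-power automorphisms
  let σ : ℕ → F ≃ₐ[Fp] F := fun i =>
    AlgEquiv.ofBijective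
      { toRingHom := iterateFrobenius F p₀ (n * i),
        commutes' := fun c => by
          show (algebraMap Fp F c) ^ p₀ ^ (n * i) = algebraMap Fp F c
          rw [← map_pow, ← hpow, hfix] }
      ((Finite.injective_iff_bijective).mp (iterateFrobenius F p₀ (n * i)).injective)
  have hσ : ∀ i (z : F), σ i z = z ^ p ^ i := fun i z => by
    have h : σ i z = z ^ p₀ ^ (n * i) := rfl
    rw [h, ← hpow]
  have hinj : ∀ i ∈ Finset.range s, ∀ j ∈ Finset.range s, σ i = σ j → i = j := by
    suffices H : ∀ i j, i < j → j < s → σ i ≠ σ j by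
      intro i hi j hj hij
      rcases lt_trichotomy i j with h | h | h
      · exact absurd hij (H i j h (mem_range.mp hj))
      · exact h
      · exact absurd hij.symm (H j i h (mem_range.mp hi))
    intro i j hij hjs heq
    have hall : ∀ z : F, z ^ p ^ j - z ^ p ^ i = 0 := fun z => by
      have := congrArg (fun σ => σ z) heq
      simp only [hσ] at this
      rw [this, sub_self]
    have hlt : p ^ i < p ^ j := Nat.pow_lt_pow_right hp1 hij
    have hP0 : (X ^ p ^ j - X ^ p ^ i : F[X]) = 0 := by
      apply eq_zero_of_natDegree_lt_card_of_eval_eq_zero' _ Finset.univ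
      · intro z _; simp [hall z]
      · rw [Finset.card_univ, hcard]
        calc (X ^ p ^ j - X ^ p ^ i : F[X]).natDegree ≤ p ^ j := by
              refine le_trans (natDegree_sub_le _ _) ?_
              simp [natDegree_X_pow, hlt.le]
        _ < p ^ s := Nat.pow_lt_pow_right hp1 hjs
    have := congrArg (fun Q : F[X] => Q.coeff (p ^ j)) hP0
    simp [coeff_X_pow, hlt.ne'] at this
  have hGal : Fintype.card (F ≃ₐ[Fp] F) = s := by
    rw [Fintype.card_eq_nat_card, IsGalois.card_aut_eq_finrank, hfr]
  have himg : (Finset.range s).image σ = Finset.univ := by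
    apply Finset.eq_univ_of_card
    rw [Finset.card_image_of_injOn fun i hi j hj h => hinj i hi j hj h, Finset.card_range, hGal]
  rw [trace_eq_sum_automorphisms, ← himg, Finset.sum_image hinj]
  exact Finset.sum_congr rfl fun i _ => hσ i z

/-- with the notation of the quotient construction,
`b(t) − f_R(a(t),a(t))/2 = Tr_{F_q/F_p}(c_A·t²)` for every `t ∈ F_q`. -/
theorem statement15 {Fp F K : Type*} [Field Fp] [Fintype Fp] [Field F] [Fintype F]
    [Field K] [IsAlgClosed K] [DecidableEq K] [Algebra Fp F] [Algebra F K]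
    (p₀ n p s q e : ℕ) (hp₀ : p₀.Prime) (hodd : Odd p₀) [CharP F p₀]
    (hn : 0 < n) (hpn : p = p₀ ^ n) (hs : 0 < s) (hq : q = p ^ s)
    (hcardp : Fintype.card Fp = p) (hcard : Fintype.card F = q)
    (a : ℕ → F) (hae : a e ≠ 0)
    -- `A ⊆ V_R ∩ F_q` a totally isotropic `F_p`-subspace with `#A = p^e` (i.e. maximal)
    (A : Finset K) (h0A : (0 : K) ∈ A)
    (hadd : ∀ x ∈ A, ∀ y ∈ A, x + y ∈ A)
    (hsmul : ∀ c : K, c ^ p = c → ∀ x ∈ A, c * x ∈ A)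
    (hAV : ∀ x ∈ A, Egen p e (fun i => algebraMap F K (a i)) x = 0)
    (hAF : ∀ x ∈ A, ∃ y : F, algebraMap F K y = x)
    (hiso : ∀ x ∈ A, ∀ y ∈ A, fgen p e (fun i => algebraMap F K (a i)) x y =
      fgen p e (fun i => algebraMap F K (a i)) y x)
    (hcardA : A.card = p ^ e)
    -- `c_A`
    (cA : K) (hcA : cA = if e = 0 then algebraMap F K (a 0) else
      (-1) ^ e * (algebraMap F K (a e) / 2) * ∏ α ∈ A.erase 0, α⁻¹)
    (cF : F) (hcF : algebraMap F K cF = cA)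
    -- the additive polynomial `a(x) ∈ F_q[x]` with `x^q − x = a(F_R(x))`
    (aQ : Polynomial F)
    (haQadd : ∀ u v : K, (aQ.map (algebraMap F K)).eval (u + v) =
      (aQ.map (algebraMap F K)).eval u + (aQ.map (algebraMap F K)).eval v)
    (haQ : ∀ x : K, x ^ q - x =
      (aQ.map (algebraMap F K)).eval ((∏ α ∈ A, (Polynomial.X - Polynomial.C α)).eval x))
    -- `Δ(x) ∈ F_q[x]` with `x·R(x) = c_A F_R(x)² + Δ^p − Δ` and
    -- `Δ(x+a) − Δ(x) = f_R(x,a) + f_R(a,a)/2` for `a ∈ A`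
    (Δ : Polynomial F)
    (hΔ1 : Polynomial.X * Rgen p e (fun i => Polynomial.C (algebraMap F K (a i))) Polynomial.X =
      Polynomial.C cA * (∏ α ∈ A, (Polynomial.X - Polynomial.C α)) ^ 2 +
        (Δ.map (algebraMap F K)) ^ p - Δ.map (algebraMap F K))
    (hΔ2 : ∀ α ∈ A,
      (Δ.map (algebraMap F K)).comp (Polynomial.X + Polynomial.C α) - Δ.map (algebraMap F K) =
        fgen p e (fun i => Polynomial.C (algebraMap F K (a i))) Polynomial.X (Polynomial.C α) +
          Polynomial.C (fgen p e (fun i => algebraMap F K (a i)) α α / 2)) :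
    let aK : ℕ → K := fun i => algebraMap F K (a i)
    let FR : Polynomial K := ∏ α ∈ A, (Polynomial.X - Polynomial.C α)
    let bval : K → K := fun x =>
      (∑ i ∈ Finset.range s, (x * Rgen p e aK x) ^ p ^ i) - fgen p e aK x (x ^ q - x)
    let aval : F → K := fun t => (aQ.map (algebraMap F K)).eval (algebraMap F K t)
    ∀ t : F, ∀ x : K, FR.eval x = algebraMap F K t →
      bval x - fgen p e aK (aval t) (aval t) / 2 =
        algebraMap F K (algebraMap Fp F (Algebra.trace Fp F (cF * t ^ 2))) := by

  intro aK FR bval aval t x hx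
  classical
  haveI := Fact.mk hp₀
  have hinjFK : Function.Injective (algebraMap F K) := (algebraMap F K).injective
  haveI : CharP K p₀ := charP_of_injective_algebraMap hinjFK p₀
  haveI : ExpChar K p₀ := ExpChar.prime hp₀
  have hp2 : 2 ≤ p := by
    subst hpn
    calc 2 ≤ p₀ := hp₀.two_le
    _ ≤ p₀ ^ n := Nat.le_self_pow hn.ne' _
  have hpodd : Odd p := by rw [hpn]; exact hodd.pow
  have hqpow : q = p₀ ^ (n * s) := by rw [hq, hpn, ← pow_mul]
  have hpow : ∀ i : ℕ, p ^ i = p₀ ^ (n * i) := fun i => by rw [hpn, ← pow_mul]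
  have hpe : (0 : ℕ) < p ^ e := pow_pos (lt_of_lt_of_le two_pos hp2) e
  -- q-th power fixes the image of F
  have hqfix : ∀ y : F, (algebraMap F K y) ^ q = algebraMap F K y := fun y => by
    rw [← map_pow]
    congr 1
    have h := FiniteField.pow_card y
    rwa [hcard] at h
  have hAfix : ∀ α ∈ A, α ^ q = α := fun α hα => by
    obtain ⟨y, hy⟩ := hAF α hα
    rw [← hy, hqfix]
  have hAneg : ∀ α ∈ A, -α ∈ A := fun α hα => by
    have h1 : ((-1 : K)) ^ p = -1 := hpodd.neg_one_pow
    simpa using hsmul (-1) h1 α hα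
  -- the q-power Frobenius ring hom
  set ψ : K →+* K := iterateFrobenius K p₀ (n * s) with hψdef
  have hψ : ∀ u : K, ψ u = u ^ q := fun u => by
    rw [hψdef, iterateFrobenius_def, ← hqpow]
  -- evaluation/Frobenius compatibility
  have hevalmap : ∀ (P : K[X]) (u : K), P.map ψ = P → P.eval u ^ q = P.eval (u ^ q) := by
    intro P u hP
    rw [← hψ, ← hψ]
    conv_rhs => rw [← hP]
    rw [Polynomial.eval_map, Polynomial.eval₂_hom]
  -- FR basics
  have hFReval : ∀ u : K, FR.eval u = ∏ α ∈ A, (u - α) := fun u => by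
    simp [FR, Polynomial.eval_prod]
  have hFRmonic : FR.Monic := monic_prod_of_monic _ _ fun α _ => monic_X_sub_C α
  have hFRdeg : FR.natDegree = p ^ e := by
    rw [show FR = ∏ α ∈ A, (X - C α) from rfl,
      Polynomial.natDegree_prod _ _ fun α _ => X_sub_C_ne_zero α]
    simp [natDegree_X_sub_C, hcardA]
  -- FR is fixed by ψ
  have hFRmap : FR.map ψ = FR := by
    rw [show FR = ∏ α ∈ A, (X - C α) from rfl]
    simp only [Polynomial.map_prod, Polynomial.map_sub, Polynomial.map_X, Polynomial.map_C]
    exact Finset.prod_congr rfl fun α hα => by rw [hψ, hAfix α hα]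
  have hFRxq : FR.eval (x ^ q) = algebraMap F K t := by
    rw [← hevalmap FR x hFRmap, hx, hqfix]
  -- shift invariance of FR under A
  have hFRshift : ∀ α ∈ A, ∀ u : K, FR.eval (u + α) = FR.eval u := by
    intro α hα u
    rw [hFReval, hFReval]
    refine Finset.prod_nbij' (fun β => β - α) (fun γ => γ + α) ?_ ?_ ?_ ?_ ?_
    · intro β hβ
      have := hadd β hβ (-α) (hAneg α hα)
      simpa [sub_eq_add_neg] using this
    · intro γ hγ
      exact hadd γ hγ α hα
    · intro β _; ring
    · intro γ _; ring
    · intro β _; ring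
  -- additivity of FR.eval at x
  have hGadd : ∀ u : K, FR.eval (u + x) = algebraMap F K t + FR.eval u := by
    set D : K[X] := FR.comp (X + C x) - C (algebraMap F K t) - FR with hD
    have hDeval : ∀ α ∈ A, D.eval α = 0 := by
      intro α hα
      simp only [hD, eval_sub, eval_comp, eval_add, eval_X, eval_C]
      rw [add_comm α x, hFRshift α hα x, hx, hFReval,
        Finset.prod_eq_zero hα (by ring)]
      ring
    have hD0 : D = 0 := by
      rcases eq_or_ne D 0 with h | h
      · exact h
      apply Polynomial.eq_zero_of_natDegree_lt_card_of_eval_eq_zero' D A hDeval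
      rw [hcardA]
      have hcm : (FR.comp (X + C x)).Monic := hFRmonic.comp_X_add_C x
      have hcd : (FR.comp (X + C x)).natDegree = p ^ e := by
        rw [natDegree_comp, hFRdeg]
        simp
      have h1 : (FR.comp (X + C x) - FR).degree < ((p ^ e : ℕ) : WithBot ℕ) := by
        have h3 : (FR.comp (X + C x) - FR).degree < (FR.comp (X + C x)).degree :=
          Polynomial.degree_sub_lt
            (by rw [Polynomial.degree_eq_natDegree hcm.ne_zero,
                  Polynomial.degree_eq_natDegree hFRmonic.ne_zero, hcd, hFRdeg])
            hcm.ne_zero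
            (by rw [hcm.leadingCoeff, hFRmonic.leadingCoeff])
        rwa [Polynomial.degree_eq_natDegree hcm.ne_zero, hcd] at h3
      have h2 : D.degree < ((p ^ e : ℕ) : WithBot ℕ) := by
        have hre : D = (FR.comp (X + C x) - FR) - C (algebraMap F K t) := by rw [hD]; ring
        rw [hre]
        refine lt_of_le_of_lt (Polynomial.degree_sub_le _ _) (max_lt h1 ?_)
        exact lt_of_le_of_lt Polynomial.degree_C_le (by exact_mod_cast hpe)
      exact (Polynomial.natDegree_lt_iff_degree_lt h).mpr h2
    intro u
    have h := congrArg (fun P : K[X] => P.eval u) hD0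
    simp only [hD, eval_sub, eval_comp, eval_add, eval_X, eval_C, eval_zero] at h
    linear_combination h
  -- x^q - x lies in A
  have hα₀ : x ^ q - x ∈ A := by
    have h1 : FR.eval (x ^ q - x) = 0 := by
      have h := hGadd (x ^ q - x)
      rw [sub_add_cancel, hFRxq] at h
      linear_combination -h
    rw [hFReval] at h1
    obtain ⟨α, hαA, hα⟩ := Finset.prod_eq_zero_iff.mp h1
    rwa [sub_eq_zero.mp hα]
  -- a(t) = x^q - x
  have haval : aval t = x ^ q - x := by
    have h := haQ x
    have hFRx : eval x (∏ α ∈ A, (X - C α)) = algebraMap F K t := hx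
    rw [hFRx] at h
    exact h.symm
  -- notation
  set α₀ : K := x ^ q - x with hα₀def
  set Δm : K[X] := Δ.map (algebraMap F K) with hΔm
  set δ : K := Δm.eval x with hδ
  -- evaluation of hΔ2 at x
  have hΔ2x : Δm.eval (x + α₀) - δ = fgen p e aK x α₀ + fgen p e aK α₀ α₀ / 2 := by
    have h := congrArg (fun P : K[X] => P.eval x) (hΔ2 α₀ hα₀)
    simp only [eval_sub, eval_comp, eval_add, eval_X, eval_C] at h
    have h2 := fgen_hom (Polynomial.evalRingHom x) p e
      (fun i => C (algebraMap F K (a i))) X (C α₀)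
    simp only [coe_evalRingHom, eval_C, eval_X] at h2
    rw [h2] at h
    exact h
  -- evaluation of hΔ1 at x
  have hΔ1x : x * Rgen p e aK x = cA * (algebraMap F K t) ^ 2 + δ ^ p - δ := by
    have h := congrArg (fun P : K[X] => P.eval x) hΔ1
    simp only [eval_sub, eval_add, eval_mul, eval_pow, eval_C, eval_X] at h
    have h2 := Rgen_hom (Polynomial.evalRingHom x) p e
      (fun i => C (algebraMap F K (a i))) X
    simp only [coe_evalRingHom, eval_C, eval_X] at h2
    have hFRx : eval x (∏ α ∈ A, (X - C α)) = algebraMap F K t := hx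
    rw [h2, hFRx] at h
    exact h
  -- Δm is fixed by ψ
  have hΔmap : Δm.map ψ = Δm := by
    rw [hΔm, Polynomial.map_map]
    congr 1
    refine RingHom.ext fun y => ?_
    rw [RingHom.comp_apply, hψ, hqfix]
  have hδq : δ ^ q = Δm.eval (x ^ q) := hevalmap Δm x hΔmap
  -- the telescoping sum
  have hsum : ∑ i ∈ Finset.range s, (x * Rgen p e aK x) ^ p ^ i
      = (∑ i ∈ Finset.range s, (cA * (algebraMap F K t) ^ 2) ^ p ^ i)
        + (δ ^ p ^ s - δ ^ p ^ 0) := by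
    rw [← Finset.sum_range_sub (fun i => δ ^ p ^ i), ← Finset.sum_add_distrib]
    refine Finset.sum_congr rfl fun i _ => ?_
    have hφ : ∀ u : K, (iterateFrobenius K p₀ (n * i)) u = u ^ p ^ i := fun u => by
      rw [iterateFrobenius_def, ← hpow]
    calc (x * Rgen p e aK x) ^ p ^ i
        = (iterateFrobenius K p₀ (n * i)) (x * Rgen p e aK x) := (hφ _).symm
      _ = (iterateFrobenius K p₀ (n * i)) (cA * (algebraMap F K t) ^ 2 + δ ^ p)
          - (iterateFrobenius K p₀ (n * i)) δ := by rw [hΔ1x, map_sub]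
      _ = (cA * (algebraMap F K t) ^ 2) ^ p ^ i + (δ ^ p ^ (i + 1) - δ ^ p ^ i) := by
          rw [map_add, hφ, hφ, hφ]
          rw [← pow_mul, ← pow_succ']
          ring
  -- trace identification
  have htr : ∑ i ∈ Finset.range s, (cA * (algebraMap F K t) ^ 2) ^ p ^ i
      = algebraMap F K (algebraMap Fp F (Algebra.trace Fp F (cF * t ^ 2))) := by
    have h1 : cA * (algebraMap F K t) ^ 2 = algebraMap F K (cF * t ^ 2) := by
      rw [map_mul, map_pow, hcF]
    rw [h1, trace_formula p₀ n p s hp₀ hn hpn hs hcardp (by rw [← hq]; exact hcard)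
      (cF * t ^ 2), map_sum]
    exact Finset.sum_congr rfl fun i _ => by rw [map_pow]
  -- final assembly
  have hxq : x ^ q = x + α₀ := by rw [hα₀def]; ring
  show (∑ i ∈ Finset.range s, (x * Rgen p e aK x) ^ p ^ i) - fgen p e aK x (x ^ q - x)
      - fgen p e aK (aval t) (aval t) / 2
      = algebraMap F K (algebraMap Fp F (Algebra.trace Fp F (cF * t ^ 2)))
  rw [hsum, htr, haval, ← hα₀def]
  have hδs : δ ^ p ^ s = Δm.eval (x + α₀) := by
    rw [← hq, hδq, hxq]
  rw [hδs, pow_zero, pow_one]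
  linear_combination hΔ2x
end
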